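/- arXiv:1101.1995 — 6 statements merged into one kernel-verified Lean document; each statement's English description precedes it below -/
import Mathlib

section
/- Let m ≥ 1 be an integer, h > 0, and let f : ℝ → ℝ be (2m+2)-times continuously differentiable on [0,h]. Define the single-interval Euler–Maclaurin quadrature K(f) = (h/2)[f(0) + f(h)] − ∑_{l=1}^{m} (B_{2l}/(2l)!) h^{2l} (f^{(2l−1)}(h) − f^{(2l−1)}(0)). Then |∫_0^h f(x) dx − K(f)| ≤ (|B_{2m+2}|/(2m+2)!) h^{2m+3} sup_{x ∈ [0,h]} |f^{(2m+2)}(x)|; in particular the quadrature error is O(h^{2m+3}). -/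
open Set MeasureTheory intervalIntegral Real

/-- Sign of the even Bernoulli kernel `B_{2k} - B_{2k}(x)` on `[0,1]`. -/
private lemma bern_kernel_sign {k : ℕ} (hk : k ≠ 0) {x : ℝ} (hx : x ∈ Set.Icc (0:ℝ) 1) :
    0 ≤ (-1:ℝ) ^ (k+1) * ((bernoulli (2*k) : ℝ) - bernoulliFun (2*k) x) := by
  have h0 : (0:ℝ) ∈ Set.Icc (0:ℝ) 1 := by norm_num
  have S0 := hasSum_one_div_nat_pow_mul_cos hk h0
  have Sx := hasSum_one_div_nat_pow_mul_cos hk hx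
  have key := (S0.sub Sx).nonneg (fun n => by
    have h1 : Real.cos (2*π*n*0) = 1 := by simp
    have h2 : Real.cos (2*π*n*x) ≤ 1 := Real.cos_le_one _
    have h3 : (0:ℝ) ≤ 1/(n:ℝ)^(2*k) := by positivity
    rw [h1]
    nlinarith)
  have hfac : (0:ℝ) < ((Nat.factorial (2*k)) : ℝ) := by exact_mod_cast Nat.factorial_pos (2*k)
  have hd : (0:ℝ) < (2*π)^(2*k) / 2 / ((Nat.factorial (2*k)) : ℝ) := by
    apply div_pos (div_pos (pow_pos (by positivity) _) two_pos) hfac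
  have e0 : (Polynomial.map (algebraMap ℚ ℝ) (Polynomial.bernoulli (2*k))).eval 0
      = ((bernoulli (2*k) : ℚ) : ℝ) := bernoulliFun_eval_zero (2*k)
  have ex : (Polynomial.map (algebraMap ℚ ℝ) (Polynomial.bernoulli (2*k))).eval x
      = bernoulliFun (2*k) x := rfl
  rw [e0, ex] at key
  have hre : (-1:ℝ) ^ (k+1) * (2*π) ^ (2*k) / 2 / (Nat.factorial (2*k) : ℝ) * ((bernoulli (2*k) : ℚ) : ℝ) -
      (-1:ℝ) ^ (k+1) * (2*π) ^ (2*k) / 2 / (Nat.factorial (2*k) : ℝ) * bernoulliFun (2*k) x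
      = ((-1:ℝ) ^ (k+1) * (((bernoulli (2*k) : ℚ) : ℝ) - bernoulliFun (2*k) x)) *
        ((2*π)^(2*k) / 2 / ((Nat.factorial (2*k)) : ℝ)) := by ring
  rw [hre] at key
  exact (mul_nonneg_iff_of_pos_right hd).mp key

/-- The scaled Bernoulli kernel on `[0,h]`. -/
private noncomputable def QB (h : ℝ) (k : ℕ) (x : ℝ) : ℝ :=
  bernoulliFun k (x / h) * h ^ k / (Nat.factorial k : ℝ)

private lemma QB_cont (h : ℝ) (k : ℕ) : Continuous (QB h k) := by
  have hb : Continuous (bernoulliFun k) := Polynomial.continuous _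
  exact ((hb.comp (continuous_id.div_const h)).mul continuous_const).div_const _

private lemma QB_deriv {h : ℝ} (hh : h ≠ 0) (k : ℕ) (x : ℝ) :
    HasDerivAt (QB h (k+1)) (QB h k x) x := by
  have h1 : HasDerivAt (fun y : ℝ => y / h) (1 / h) x := by
    simpa using (hasDerivAt_id x).div_const h
  have h2 := (hasDerivAt_bernoulliFun (k+1) (x/h)).comp x h1
  have h3 := (h2.mul_const (h ^ (k+1))).div_const ((Nat.factorial (k+1)) : ℝ)
  refine h3.congr_deriv ?_
  symm
  simp only [Nat.add_sub_cancel, Function.comp_def]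
  have hfac : ((Nat.factorial (k+1)) : ℝ) = (k+1) * (Nat.factorial k : ℝ) := by exact_mod_cast Nat.factorial_succ k
  have hfk : ((Nat.factorial k) : ℝ) ≠ 0 := by exact_mod_cast Nat.factorial_ne_zero k
  rw [QB, hfac]
  push_cast
  field_simp
  ring

private lemma QB_zero (h : ℝ) (k : ℕ) : QB h k 0 = (bernoulli k : ℝ) * h ^ k / (Nat.factorial k : ℝ) := by
  rw [QB, zero_div, bernoulliFun_eval_zero]

private lemma QB_h {h : ℝ} (hh : h ≠ 0) {k : ℕ} (hk : k ≠ 1) :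
    QB h k h = (bernoulli k : ℝ) * h ^ k / (Nat.factorial k : ℝ) := by
  rw [QB, div_self hh, bernoulliFun_endpoints_eq_of_ne_one hk, bernoulliFun_eval_zero]

private lemma QB_one_h {h : ℝ} (hh : h ≠ 0) : QB h 1 h = h / 2 := by
  rw [QB, div_self hh, bernoulliFun_eval_one, bernoulliFun_eval_zero]
  norm_num [bernoulli_one]
  ring

private lemma QB_one_zero (h : ℝ) : QB h 1 0 = -(h / 2) := by
  rw [QB_zero, bernoulli_one, Nat.factorial_one]
  push_cast
  ring

private lemma QB_zero_fun (h : ℝ) (x : ℝ) : QB h 0 x = 1 := by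
  rw [QB]
  simp [bernoulliFun, Polynomial.bernoulli_zero]

private lemma QB_integral {h : ℝ} (hh : 0 < h) {k : ℕ} (hk : k ≠ 0) :
    ∫ x in (0:ℝ)..h, QB h k x = 0 := by
  have : ∫ x in (0:ℝ)..h, bernoulliFun k (x / h) = 0 := by
    rw [intervalIntegral.integral_comp_div (fun x => bernoulliFun k x) hh.ne', zero_div,
      div_self hh.ne', integral_bernoulliFun_eq_zero hk, smul_zero]
  have e : ∀ x : ℝ, QB h k x = (h ^ k / (Nat.factorial k : ℝ)) * bernoulliFun k (x / h) := by
    intro x; rw [QB]; ring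
  simp_rw [e]
  rw [intervalIntegral.integral_const_mul, this, mul_zero]

/-- **Error bound for the single-interval Euler–Maclaurin quadrature.**
For `m ≥ 1`, `h > 0` and `f` a `(2m+2)`-times continuously differentiable function on `[0, h]`,
the quadrature `K(f) = (h/2)(f 0 + f h) - ∑_{l=1}^m (B_{2l}/(2l)!) h^{2l} (f^{(2l-1)}(h) -
f^{(2l-1)}(0))` satisfies
`|∫_0^h f - K(f)| ≤ (|B_{2m+2}|/(2m+2)!) h^{2m+3} sup_{x ∈ [0,h]} |f^{(2m+2)}(x)|`. -/
theorem euler_maclaurin_single_interval_error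
    (m : ℕ) (hm : 1 ≤ m) (h : ℝ) (hh : 0 < h)
    (f : ℝ → ℝ) (hf : ContDiffOn ℝ ((2 * m + 2 : ℕ) : ℕ∞) f (Set.Icc 0 h)) :
    |(∫ x in (0:ℝ)..h, f x) -
        (h / 2 * (f 0 + f h) -
          ∑ l ∈ Finset.Icc 1 m,
            (bernoulli (2 * l) : ℝ) / (Nat.factorial (2 * l)) * h ^ (2 * l) *
              (iteratedDerivWithin (2 * l - 1) f (Set.Icc 0 h) h -
                iteratedDerivWithin (2 * l - 1) f (Set.Icc 0 h) 0))| ≤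
      |(bernoulli (2 * m + 2) : ℝ)| / (Nat.factorial (2 * m + 2)) * h ^ (2 * m + 3) *
        sSup ((fun x => |iteratedDerivWithin (2 * m + 2) f (Set.Icc 0 h) x|) '' Set.Icc 0 h) := by
  set s : Set ℝ := Set.Icc 0 h with hs_def
  have hsU : UniqueDiffOn ℝ s := uniqueDiffOn_Icc hh
  set F : ℕ → ℝ → ℝ := fun k => iteratedDerivWithin k f s with hF_def
  -- continuity of iterated derivatives
  have hFc : ∀ k : ℕ, k ≤ 2*m+2 → ContinuousOn (F k) s := by
    intro k hk
    exact hf.continuousOn_iteratedDerivWithin (by exact_mod_cast hk) hsU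
  -- derivatives of iterated derivatives on the interior
  have hFd : ∀ k : ℕ, k < 2*m+2 → ∀ x ∈ Set.Ioo (0:ℝ) h, HasDerivAt (F k) (F (k+1) x) x := by
    intro k hk x hx
    have hxs : x ∈ s := Set.Ioo_subset_Icc_self hx
    have hdiff : DifferentiableOn ℝ (F k) s :=
      hf.differentiableOn_iteratedDerivWithin (by exact_mod_cast hk) hsU
    have h1 : HasDerivWithinAt (F k) (F (k+1) x) s x := by
      rw [show F (k+1) x = derivWithin (F k) s x from congrFun iteratedDerivWithin_succ x]
      exact (hdiff x hxs).hasDerivWithinAt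
    exact h1.hasDerivAt (Icc_mem_nhds hx.1 hx.2)
  -- integrability
  have hInt : ∀ k : ℕ, k ≤ 2*m+2 →
      IntervalIntegrable (fun x => QB h k x * F k x) volume 0 h := by
    intro k hk
    exact (((QB_cont h k).continuousOn).mul (hFc k hk)).intervalIntegrable_of_Icc hh.le
  -- integration by parts
  have hIBP : ∀ k : ℕ, k < 2*m+2 →
      (∫ x in (0:ℝ)..h, QB h k x * F k x) + (∫ x in (0:ℝ)..h, QB h (k+1) x * F (k+1) x)
        = QB h (k+1) h * F k h - QB h (k+1) 0 * F k 0 := by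
    intro k hk
    rw [← intervalIntegral.integral_add (hInt k hk.le) (hInt (k+1) hk)]
    exact integral_eq_sub_of_hasDeriv_right_of_le hh.le
      (((QB_cont h (k+1)).continuousOn).mul (hFc k hk.le))
      (fun x hx => (((QB_deriv hh.ne' k x).mul (hFd k hk x hx))).hasDerivWithinAt)
      ((hInt k hk.le).add (hInt (k+1) hk))
  -- base case of the iterated derivatives
  have hF0 : F 0 = f := iteratedDerivWithin_zero
  have hI0 : (∫ x in (0:ℝ)..h, QB h 0 x * F 0 x) = ∫ x in (0:ℝ)..h, f x := by
    rw [hF0]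
    simp only [QB_zero_fun, one_mul]
  -- Step A : trapezoid
  have eqA : (∫ x in (0:ℝ)..h, f x)
      = h / 2 * (f 0 + f h) - (∫ x in (0:ℝ)..h, QB h 1 x * F 1 x) := by
    have e := hIBP 0 (by omega)
    rw [hI0, QB_one_h hh.ne', QB_one_zero, hF0] at e
    ring_nf at e ⊢
    linarith [e]
  -- Step B : induction producing the Bernoulli correction terms
  have eqB : ∀ j, j ≤ m → (∫ x in (0:ℝ)..h, QB h 1 x * F 1 x)
      = (∑ l ∈ Finset.Icc 1 j, (bernoulli (2*l) : ℝ) / (Nat.factorial (2*l)) * h ^ (2*l) *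
          (F (2*l-1) h - F (2*l-1) 0))
        + (∫ x in (0:ℝ)..h, QB h (2*j+1) x * F (2*j+1) x) := by
    intro j
    induction j with
    | zero =>
      intro _
      rw [Finset.Icc_eq_empty (by omega)]
      simp
    | succ j ih =>
      intro hj
      have e1 := hIBP (2*j+1) (by omega)
      have e2 := hIBP (2*j+2) (by omega)
      simp only [show 2*j+1+1 = 2*j+2 from by omega] at e1
      have hodd : (bernoulli (2*j+2+1) : ℝ) = 0 := by
        have hz : bernoulli (2*j+2+1) = 0 := by
          rw [bernoulli_eq_bernoulli'_of_ne_one (by omega)]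
          exact bernoulli'_eq_zero_of_odd (by rw [Nat.odd_iff]; omega) (by omega)
        rw [hz]; norm_num
      rw [QB_h (k := 2*j+2) hh.ne' (by omega), QB_zero] at e1
      rw [QB_h (k := 2*j+2+1) hh.ne' (by omega), QB_zero, hodd] at e2
      have e2' : (∫ x in (0:ℝ)..h, QB h (2*j+2) x * F (2*j+2) x)
          = - (∫ x in (0:ℝ)..h, QB h (2*j+2+1) x * F (2*j+2+1) x) := by
        simp only [zero_mul, zero_div, sub_zero] at e2
        linarith [e2]
      rw [Finset.sum_Icc_succ_top (by omega : 1 ≤ j+1), ih (by omega)]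
      have hidx1 : 2*(j+1)-1 = 2*j+1 := by omega
      have hidx2 : 2*(j+1) = 2*j+2 := by omega
      rw [hidx1, hidx2]
      rw [e2'] at e1
      ring_nf at e1 ⊢
      linarith [e1]
  -- Step C : the quadrature error equals minus the last integral
  have eqC : (∫ x in (0:ℝ)..h, f x) -
      (h / 2 * (f 0 + f h) - ∑ l ∈ Finset.Icc 1 m,
        (bernoulli (2*l) : ℝ) / (Nat.factorial (2*l)) * h ^ (2*l) *
          (F (2*l-1) h - F (2*l-1) 0))
      = - (∫ x in (0:ℝ)..h, QB h (2*m+1) x * F (2*m+1) x) := by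
    rw [eqA, eqB m le_rfl]
    ring
  -- Step D : express the remainder with the shifted kernel
  set C : ℝ := (bernoulli (2*m+2) : ℝ) * h ^ (2*m+2) / (Nat.factorial (2*m+2) : ℝ) with hC
  have hIntR : IntervalIntegrable (fun x => (QB h (2*m+2) x - C) * F (2*m+2) x) volume 0 h :=
    ((((QB_cont h (2*m+2)).sub continuous_const).continuousOn).mul
      (hFc (2*m+2) le_rfl)).intervalIntegrable_of_Icc hh.le
  have hbh : QB h (2*m+2) h = C := by rw [QB_h (k := 2*m+2) hh.ne' (by omega), hC]
  have hb0 : QB h (2*m+2) 0 = C := by rw [QB_zero, hC]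
  have eqD : (∫ x in (0:ℝ)..h, QB h (2*m+1) x * F (2*m+1) x)
      + (∫ x in (0:ℝ)..h, (QB h (2*m+2) x - C) * F (2*m+2) x) = 0 := by
    rw [← intervalIntegral.integral_add (hInt (2*m+1) (by omega)) hIntR]
    have key := integral_eq_sub_of_hasDeriv_right_of_le (f := fun x => (QB h (2*m+2) x - C) * F (2*m+1) x)
      (f' := fun x => QB h (2*m+1) x * F (2*m+1) x + (QB h (2*m+2) x - C) * F (2*m+2) x)
      hh.le
      ((((QB_cont h (2*m+2)).sub continuous_const).continuousOn).mul (hFc (2*m+1) (by omega)))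
      (fun x hx => (((QB_deriv hh.ne' (2*m+1) x).sub_const C).mul
        (hFd (2*m+1) (by omega) x hx)).hasDerivWithinAt)
      ((hInt (2*m+1) (by omega)).add hIntR)
    rw [key]
    simp only [hbh, hb0]
    ring
  -- Step E : bound the remainder
  set M : ℝ := sSup ((fun x => |F (2*m+2) x|) '' s) with hM_def
  have hcs : IsCompact s := hs_def ▸ isCompact_Icc
  have himg : ContinuousOn (fun x => |F (2*m+2) x|) s := (hFc (2*m+2) le_rfl).abs
  have hbdd : BddAbove ((fun x => |F (2*m+2) x|) '' s) :=
    (hcs.image_of_continuousOn himg).bddAbove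
  have hMb : ∀ x ∈ s, |F (2*m+2) x| ≤ M := fun x hx => le_csSup hbdd ⟨x, hx, rfl⟩
  have hM0 : 0 ≤ M := le_trans (abs_nonneg _)
    (hMb 0 (by rw [hs_def]; exact Set.mem_Icc.mpr ⟨le_rfl, hh.le⟩))
  have hsign : ∀ x ∈ Set.Icc (0:ℝ) h, 0 ≤ (-1:ℝ)^(m+1) * (QB h (2*m+2) x - C) := by
    intro x hx
    have hxh : x / h ∈ Set.Icc (0:ℝ) 1 :=
      ⟨div_nonneg hx.1 hh.le, (div_le_one hh).mpr hx.2⟩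
    have hker := bern_kernel_sign (k := m+1) (by omega) hxh
    have h2 : 2*(m+1) = 2*m+2 := by omega
    rw [h2] at hker
    have hp : (0:ℝ) ≤ h ^ (2*m+2) / (Nat.factorial (2*m+2) : ℝ) := by positivity
    have e : (-1:ℝ)^(m+1) * (QB h (2*m+2) x - C)
        = ((-1:ℝ)^(m+1+1) * ((bernoulli (2*m+2) : ℝ) - bernoulliFun (2*m+2) (x/h))) *
          (h ^ (2*m+2) / (Nat.factorial (2*m+2) : ℝ)) := by
      rw [QB, hC]; ring
    rw [e]
    exact mul_nonneg hker hp
  have hptw : ∀ x ∈ Set.Icc (0:ℝ) h,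
      |(QB h (2*m+2) x - C) * F (2*m+2) x| ≤ ((-1:ℝ)^(m+1) * M) * (QB h (2*m+2) x - C) := by
    intro x hx
    have habs : |QB h (2*m+2) x - C| = (-1:ℝ)^(m+1) * (QB h (2*m+2) x - C) := by
      rw [← abs_of_nonneg (hsign x hx), abs_mul, abs_pow, abs_neg, abs_one, one_pow, one_mul]
    have hx' : x ∈ s := by rw [hs_def]; exact hx
    calc |(QB h (2*m+2) x - C) * F (2*m+2) x|
        = |QB h (2*m+2) x - C| * |F (2*m+2) x| := abs_mul _ _
      _ ≤ |QB h (2*m+2) x - C| * M := mul_le_mul_of_nonneg_left (hMb x hx') (abs_nonneg _)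
      _ = ((-1:ℝ)^(m+1) * M) * (QB h (2*m+2) x - C) := by rw [habs]; ring
  have hIntMaj : IntervalIntegrable
      (fun x => ((-1:ℝ)^(m+1) * M) * (QB h (2*m+2) x - C)) volume 0 h :=
    (continuous_const.mul ((QB_cont h (2*m+2)).sub continuous_const)).intervalIntegrable 0 h
  have hQint : (∫ x in (0:ℝ)..h, QB h (2*m+2) x) = 0 := QB_integral hh (by omega)
  have hmajval : (∫ x in (0:ℝ)..h, ((-1:ℝ)^(m+1) * M) * (QB h (2*m+2) x - C))
      = ((-1:ℝ)^(m+1) * M) * (-(C * h)) := by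
    rw [intervalIntegral.integral_const_mul]
    congr 1
    rw [intervalIntegral.integral_sub ((QB_cont h (2*m+2)).intervalIntegrable 0 h)
      intervalIntegrable_const, hQint, intervalIntegral.integral_const]
    simp
    ring
  have hR : |∫ x in (0:ℝ)..h, (QB h (2*m+2) x - C) * F (2*m+2) x|
      ≤ (-1:ℝ)^m * M * C * h := by
    calc |∫ x in (0:ℝ)..h, (QB h (2*m+2) x - C) * F (2*m+2) x|
        ≤ ∫ x in (0:ℝ)..h, |(QB h (2*m+2) x - C) * F (2*m+2) x| :=
          intervalIntegral.abs_integral_le_integral_abs hh.le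
      _ ≤ ∫ x in (0:ℝ)..h, ((-1:ℝ)^(m+1) * M) * (QB h (2*m+2) x - C) :=
          intervalIntegral.integral_mono_on hh.le hIntR.abs hIntMaj hptw
      _ = ((-1:ℝ)^(m+1) * M) * (-(C * h)) := hmajval
      _ = (-1:ℝ)^m * M * C * h := by ring
  have hRval : (∫ x in (0:ℝ)..h, f x) -
      (h / 2 * (f 0 + f h) - ∑ l ∈ Finset.Icc 1 m,
        (bernoulli (2*l) : ℝ) / (Nat.factorial (2*l)) * h ^ (2*l) *
          (F (2*l-1) h - F (2*l-1) 0))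
      = ∫ x in (0:ℝ)..h, (QB h (2*m+2) x - C) * F (2*m+2) x := by
    rw [eqC]
    linarith [eqD]
  have hb : (-1:ℝ)^m * (bernoulli (2*m+2) : ℝ) ≤ |(bernoulli (2*m+2) : ℝ)| := by
    calc (-1:ℝ)^m * (bernoulli (2*m+2) : ℝ) ≤ |(-1:ℝ)^m * (bernoulli (2*m+2) : ℝ)| :=
        le_abs_self _
      _ = |(bernoulli (2*m+2) : ℝ)| := by
        rw [abs_mul, abs_pow, abs_neg, abs_one, one_pow, one_mul]
  have hnn : 0 ≤ M * h ^ (2*m+3) / (Nat.factorial (2*m+2) : ℝ) := by positivity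
  have hfinal : |(∫ x in (0:ℝ)..h, f x) -
      (h / 2 * (f 0 + f h) - ∑ l ∈ Finset.Icc 1 m,
        (bernoulli (2*l) : ℝ) / (Nat.factorial (2*l)) * h ^ (2*l) *
          (F (2*l-1) h - F (2*l-1) 0))|
      ≤ |(bernoulli (2*m+2) : ℝ)| / (Nat.factorial (2*m+2)) * h ^ (2*m+3) * M := by
    rw [hRval]
    calc |∫ x in (0:ℝ)..h, (QB h (2*m+2) x - C) * F (2*m+2) x|
        ≤ (-1:ℝ)^m * M * C * h := hR
      _ = ((-1:ℝ)^m * (bernoulli (2*m+2) : ℝ)) *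
          (M * h ^ (2*m+3) / (Nat.factorial (2*m+2) : ℝ)) := by rw [hC]; ring
      _ ≤ |(bernoulli (2*m+2) : ℝ)| *
          (M * h ^ (2*m+3) / (Nat.factorial (2*m+2) : ℝ)) :=
          mul_le_mul_of_nonneg_right hb hnn
      _ = |(bernoulli (2*m+2) : ℝ)| / (Nat.factorial (2*m+2)) * h ^ (2*m+3) * M := by ring
  simpa only [hM_def, hF_def] using hfinal
end

section
/- Let n ≥ 2 be an integer, h > 0, and let f : ℝ → ℝ be of class C^{n−2} with all derivatives of order 0 through n−2 bounded in absolute value by M on ℝ. Let F_j (2 ≤ j ≤ n) be the prolongation functions of f. Let q : [0,h] → ℝ be an n-times continuously differentiable solution of q̈(t) = f(q(t)), let q_d : ℝ → ℝ be a polynomial, and let τ ∈ {0, h} be such that q_d(τ) = q(τ) and the prolongation-collocation conditions q_d^{(j)}(τ) = F_j(q_d(τ), q̇_d(τ)) hold for all j = 2, …, n. Let R > 0 be such that |q̇(τ)| ≤ R and |q̇_d(τ)| ≤ R. Then there exists a constant C > 0 depending only on n, M, and R such that |q_d^{(j)}(τ) − q^{(j)}(τ)| ≤ C |q̇_d(τ)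 − q̇(τ)| for every j = 2, …, n. In particular, if q̇_d(τ) = q̇(τ) + O(h^p) then q_d^{(j)}(τ) = q^{(j)}(τ) + O(h^p) for all j = 2, …, n. -/
/-- The prolongation functions of `f : ℝ → ℝ`: `prolong f k` represents `F_{k+2}`, defined
recursively by `F_2 (x, v) = f x` and
`F_{j+1} (x, v) = v ∂F_j/∂x (x, v) + f x ∂F_j/∂v (x, v)`. -/
noncomputable def prolong (f : ℝ → ℝ) : ℕ → ℝ → ℝ → ℝ
  | 0, x, _ => f x
  | (k + 1), x, v =>
      v * deriv (fun y => prolong f k y v) x + f x * deriv (fun w => prolong f k x w) v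

namespace PC

/-- Formal expressions in `v` and the derivatives `f^(i)` of `f`. -/
inductive E where
  | v : E
  | fd : ℕ → E
  | const : ℝ → E
  | add : E → E → E
  | mul : E → E → E

noncomputable def ev (g : ℕ → ℝ) (w : ℝ) : E → ℝ
  | .v => w
  | .fd i => g i
  | .const c => c
  | .add a b => ev g w a + ev g w b
  | .mul a b => ev g w a * ev g w b

def ord : E → ℕ
  | .v => 0
  | .fd i => i
  | .const _ => 0
  | .add a b => max (ord a) (ord b)
  | .mul a b => max (ord a) (ord b)

def dx : E → E
  | .v => .const 0
  | .fd i => .fd (i + 1)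
  | .const _ => .const 0
  | .add a b => .add (dx a) (dx b)
  | .mul a b => .add (.mul (dx a) b) (.mul a (dx b))

def dv : E → E
  | .v => .const 1
  | .fd _ => .const 0
  | .const _ => .const 0
  | .add a b => .add (dv a) (dv b)
  | .mul a b => .add (.mul (dv a) b) (.mul a (dv b))

noncomputable def Q : ℕ → E
  | 0 => .fd 0
  | k + 1 => .add (.mul .v (dx (Q k))) (.mul (.fd 0) (dv (Q k)))

lemma ord_dx (e : E) : ord (dx e) ≤ ord e + 1 := by
  induction e with
  | v => simp [dx, ord]
  | fd i => simp [dx, ord]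
  | const c => simp [dx, ord]
  | add a b iha ihb => simp [dx, ord]; omega
  | mul a b iha ihb => simp [dx, ord]; omega

lemma ord_dv (e : E) : ord (dv e) ≤ ord e := by
  induction e with
  | v => simp [dv, ord]
  | fd i => simp [dv, ord]
  | const c => simp [dv, ord]
  | add a b iha ihb => simp [dv, ord]; omega
  | mul a b iha ihb => simp [dv, ord]; omega

lemma ord_Q (k : ℕ) : ord (Q k) ≤ k := by
  induction k with
  | zero => simp [Q, ord]
  | succ k ih =>
    have h1 := ord_dx (Q k)
    have h2 := ord_dv (Q k)
    simp only [Q, ord]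
    omega

/-- Derivative of evaluation in the `v` variable. -/
lemma ev_hasDerivAt_v (g : ℕ → ℝ) (e : E) (v : ℝ) :
    HasDerivAt (fun w => ev g w e) (ev g v (dv e)) v := by
  induction e with
  | v => simp only [ev, dv]; exact hasDerivAt_id' v
  | fd i => simpa [ev, dv] using hasDerivAt_const v (g i)
  | const c => simpa [ev, dv] using hasDerivAt_const v c
  | add a b iha ihb => simp only [ev, dv]; exact iha.add ihb
  | mul a b iha ihb =>
    have h := iha.mul ihb
    simp only [ev, dv]
    exact h

/-- Chain rule for evaluation along two curves. -/
lemma ev_hasDerivWithinAt {m : ℕ} {f : ℝ → ℝ} (hf : ContDiff ℝ (m : ℕ∞) f)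
    (e : E) (he : ord e < m) {S : Set ℝ} {t : ℝ} {u w : ℝ → ℝ} {u' w' : ℝ}
    (hu : HasDerivWithinAt u u' S t) (hw : HasDerivWithinAt w w' S t) :
    HasDerivWithinAt (fun s => ev (fun i => iteratedDeriv i f (u s)) (w s) e)
      (ev (fun i => iteratedDeriv i f (u t)) (w t) (dx e) * u' +
       ev (fun i => iteratedDeriv i f (u t)) (w t) (dv e) * w') S t := by
  induction e with
  | v => simpa [ev, dx, dv] using hw
  | fd i =>
    have hlt : (i : WithTop ℕ∞) < (m : ℕ∞) := by
      simp only [ord] at he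
      exact_mod_cast he
    have hd : HasDerivAt (iteratedDeriv i f) (iteratedDeriv (i + 1) f (u t)) (u t) := by
      have hdiff := (hf.differentiable_iteratedDeriv i hlt).differentiableAt (x := u t)
      have := hdiff.hasDerivAt
      rwa [iteratedDeriv_succ]
    have h := hd.comp_hasDerivWithinAt t hu
    simp only [ev, dx, dv, zero_mul, add_zero]
    exact h
  | const c => simpa [ev, dx, dv] using hasDerivWithinAt_const t S c
  | add a b iha ihb =>
    simp only [ord] at he
    have ha := iha (by omega)
    have hb := ihb (by omega)
    have := ha.add hb
    simp only [ev, dx, dv]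
    refine this.congr_deriv ?_
    ring
  | mul a b iha ihb =>
    simp only [ord] at he
    have ha := iha (by omega)
    have hb := ihb (by omega)
    have := ha.mul hb
    simp only [ev, dx, dv]
    refine this.congr_deriv ?_
    ring

/-- Uniform bound on evaluation. -/
lemma ev_bound (M R : ℝ) (hR : 0 < R) (e : E) :
    ∃ C > 0, ∀ (g : ℕ → ℝ) (v : ℝ), (∀ i ≤ ord e, |g i| ≤ M) → |v| ≤ R →
      |ev g v e| ≤ C := by
  induction e with
  | v => exact ⟨R, hR, fun g v _ hv => hv⟩
  | fd i =>
    refine ⟨max M 1, lt_of_lt_of_le one_pos (le_max_right _ _), fun g v hg _ => ?_⟩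
    exact le_trans (hg i le_rfl) (le_max_left _ _)
  | const c =>
    exact ⟨|c| + 1, by positivity, fun g v _ _ => by simp [ev]⟩
  | add a b iha ihb =>
    obtain ⟨Ca, hCa, ha⟩ := iha
    obtain ⟨Cb, hCb, hb⟩ := ihb
    refine ⟨Ca + Cb, by linarith, fun g v hg hv => ?_⟩
    have hga : ∀ i ≤ ord a, |g i| ≤ M := fun i hi => hg i (le_trans hi (by simp [ord]))
    have hgb : ∀ i ≤ ord b, |g i| ≤ M := fun i hi => hg i (le_trans hi (by simp [ord]))
    calc |ev g v (E.add a b)| ≤ |ev g v a| + |ev g v b| := abs_add_le _ _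
      _ ≤ Ca + Cb := add_le_add (ha g v hga hv) (hb g v hgb hv)
  | mul a b iha ihb =>
    obtain ⟨Ca, hCa, ha⟩ := iha
    obtain ⟨Cb, hCb, hb⟩ := ihb
    refine ⟨Ca * Cb, by positivity, fun g v hg hv => ?_⟩
    have hga : ∀ i ≤ ord a, |g i| ≤ M := fun i hi => hg i (le_trans hi (by simp [ord]))
    have hgb : ∀ i ≤ ord b, |g i| ≤ M := fun i hi => hg i (le_trans hi (by simp [ord]))
    calc |ev g v (E.mul a b)| = |ev g v a| * |ev g v b| := abs_mul _ _
      _ ≤ Ca * Cb := mul_le_mul (ha g v hga hv) (hb g v hgb hv) (abs_nonneg _) (le_of_lt hCa)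

/-- The prolongation functions are evaluations of the formal expressions `Q k`. -/
lemma prolong_eq_ev {m : ℕ} {f : ℝ → ℝ} (hf : ContDiff ℝ (m : ℕ∞) f) :
    ∀ k, k ≤ m → ∀ x v, prolong f k x v = ev (fun i => iteratedDeriv i f x) v (Q k) := by
  intro k
  induction k with
  | zero => intro _ x v; simp [prolong, Q, ev]
  | succ k ih =>
    intro hk x v
    have hkm : k ≤ m := by omega
    have hordQ : ord (Q k) < m := lt_of_le_of_lt (ord_Q k) (by omega)
    -- derivative in x
    have h1 : HasDerivWithinAt
        (fun y => ev (fun i => iteratedDeriv i f (id y)) ((fun _ => v) y) (Q k))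
        (ev (fun i => iteratedDeriv i f (id x)) ((fun _ => v) x) (dx (Q k)) * 1 +
         ev (fun i => iteratedDeriv i f (id x)) ((fun _ => v) x) (dv (Q k)) * 0)
        Set.univ x :=
      ev_hasDerivWithinAt hf (Q k) hordQ (hasDerivAt_id x).hasDerivWithinAt
        (hasDerivAt_const x v).hasDerivWithinAt
    have h2 : HasDerivWithinAt (fun y => prolong f k y v)
        (ev (fun i => iteratedDeriv i f (id x)) ((fun _ => v) x) (dx (Q k)) * 1 +
         ev (fun i => iteratedDeriv i f (id x)) ((fun _ => v) x) (dv (Q k)) * 0)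
        Set.univ x :=
      h1.congr (fun y _ => ih hkm y v) (ih hkm x v)
    have hx : HasDerivAt (fun y => prolong f k y v)
        (ev (fun i => iteratedDeriv i f x) v (dx (Q k))) x := by
      simpa using hasDerivWithinAt_univ.mp h2
    -- derivative in v
    have hv : HasDerivAt (fun w => prolong f k x w)
        (ev (fun i => iteratedDeriv i f x) v (dv (Q k))) v := by
      have h3 := (ev_hasDerivAt_v (fun i => iteratedDeriv i f x) (Q k) v).hasDerivWithinAt
        (s := Set.univ)
      have h4 := h3.congr (fun w _ => ih hkm x w) (ih hkm x v)
      exact hasDerivWithinAt_univ.mp h4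
    have hpro : prolong f (k + 1) x v =
        v * deriv (fun y => prolong f k y v) x + f x * deriv (fun w => prolong f k x w) v := by
      simp [prolong]
    rw [hpro, hx.deriv, hv.deriv]
    simp [Q, ev, iteratedDeriv_zero]

/-- Derivatives of a solution of `q'' = f ∘ q` are the prolongation evaluations. -/
lemma solution_eq_ev {n : ℕ} (hn : 2 ≤ n) {h : ℝ} (hh : 0 < h) {f q : ℝ → ℝ}
    (hf : ContDiff ℝ ((n - 2 : ℕ) : ℕ∞) f)
    (hq : ContDiffOn ℝ (n : ℕ∞) q (Set.Icc 0 h))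
    (hode : ∀ t ∈ Set.Icc (0 : ℝ) h, iteratedDerivWithin 2 q (Set.Icc 0 h) t = f (q t)) :
    ∀ k, k + 2 ≤ n → ∀ t ∈ Set.Icc (0 : ℝ) h,
      iteratedDerivWithin (k + 2) q (Set.Icc 0 h) t =
        ev (fun i => iteratedDeriv i f (q t))
          (iteratedDerivWithin 1 q (Set.Icc 0 h) t) (Q k) := by
  have hUS : UniqueDiffOn ℝ (Set.Icc (0 : ℝ) h) := uniqueDiffOn_Icc hh
  intro k
  induction k with
  | zero =>
    intro _ t ht
    simpa [Q, ev, iteratedDeriv_zero] using hode t ht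
  | succ k ih =>
    intro hk t ht
    set S := Set.Icc (0 : ℝ) h with hS
    have hkn : k + 2 ≤ n := by omega
    have hord : ord (Q k) < n - 2 := lt_of_le_of_lt (ord_Q k) (by omega)
    -- the curves
    have hq1diff : DifferentiableOn ℝ (iteratedDerivWithin 1 q S) S :=
      hq.differentiableOn_iteratedDerivWithin (by exact_mod_cast (by omega : 1 < n)) hUS
    have hqdiff : DifferentiableOn ℝ q S :=
      hq.differentiableOn (by exact_mod_cast (by omega : n ≠ 0))
    have hu : HasDerivWithinAt q (iteratedDerivWithin 1 q S t) S t := by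
      have := (hqdiff t ht).hasDerivWithinAt
      rwa [← iteratedDerivWithin_one] at this
    have hw : HasDerivWithinAt (iteratedDerivWithin 1 q S) (f (q t)) S t := by
      have h1 := (hq1diff t ht).hasDerivWithinAt
      have h2 : derivWithin (iteratedDerivWithin 1 q S) S t = iteratedDerivWithin 2 q S t :=
        (congrFun iteratedDerivWithin_succ t).symm
      rw [h2, hode t ht] at h1
      exact h1
    have hder := ev_hasDerivWithinAt hf (Q k) hord hu hw
    -- transfer via IH
    have hcongr : HasDerivWithinAt (iteratedDerivWithin (k + 2) q S)
        (ev (fun i => iteratedDeriv i f (q t)) (iteratedDerivWithin 1 q S t) (dx (Q k)) *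
            iteratedDerivWithin 1 q S t +
         ev (fun i => iteratedDeriv i f (q t)) (iteratedDerivWithin 1 q S t) (dv (Q k)) *
            f (q t)) S t :=
      hder.congr (fun s hs => (ih hkn s hs)) (ih hkn t ht)
    have : iteratedDerivWithin (k + 1 + 2) q S t
        = derivWithin (iteratedDerivWithin (k + 2) q S) S t := by
      show iteratedDerivWithin (k + 2 + 1) q S t = _
      exact congrFun iteratedDerivWithin_succ t
    rw [this, hcongr.derivWithin (hUS t ht)]
    simp [Q, ev, iteratedDeriv_zero]
    ring

end PC

/-- **Lipschitz estimate for endpoint derivatives of prolongation-collocation polynomials.**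
Let `n ≥ 2`, `f` of class `C^{n-2}` with derivatives of orders `0, …, n-2` bounded by `M`, and
`R > 0`.  There is a constant `C > 0`, depending only on `n`, `M`, `R`, such that for every
`h > 0`, every `n`-times continuously differentiable solution `q` of `q̈ = f(q)` on `[0, h]`,
every polynomial `q_d` and every endpoint `τ ∈ {0, h}` with `q_d(τ) = q(τ)` satisfying the
prolongation-collocation conditions `q_d^{(j)}(τ) = F_j(q_d(τ), q̇_d(τ))` for `j = 2, …, n`,
and with `|q̇(τ)| ≤ R`, `|q̇_d(τ)| ≤ R`, one has
`|q_d^{(j)}(τ) - q^{(j)}(τ)| ≤ C |q̇_d(τ) - q̇(τ)|` for all `j = 2, …, n`. -/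
theorem prolongation_collocation_lipschitz
    (n : ℕ) (hn : 2 ≤ n) (M R : ℝ) (hR : 0 < R) :
    ∃ C > 0,
      ∀ h : ℝ, 0 < h →
      ∀ f : ℝ → ℝ, ContDiff ℝ ((n - 2 : ℕ) : ℕ∞) f →
        (∀ i ≤ n - 2, ∀ x : ℝ, |iteratedDeriv i f x| ≤ M) →
      ∀ q : ℝ → ℝ, ContDiffOn ℝ (n : ℕ∞) q (Set.Icc 0 h) →
        (∀ t ∈ Set.Icc (0 : ℝ) h, iteratedDerivWithin 2 q (Set.Icc 0 h) t = f (q t)) →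
      ∀ qd : Polynomial ℝ, ∀ τ ∈ ({0, h} : Set ℝ),
        qd.eval τ = q τ →
        (∀ j : ℕ, 2 ≤ j → j ≤ n →
          (Polynomial.derivative^[j] qd).eval τ =
            prolong f (j - 2) (qd.eval τ) ((Polynomial.derivative qd).eval τ)) →
        |iteratedDerivWithin 1 q (Set.Icc 0 h) τ| ≤ R →
        |(Polynomial.derivative qd).eval τ| ≤ R →
        ∀ j : ℕ, 2 ≤ j → j ≤ n →
          |(Polynomial.derivative^[j] qd).eval τ - iteratedDerivWithin j q (Set.Icc 0 h) τ| ≤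
            C * |(Polynomial.derivative qd).eval τ - iteratedDerivWithin 1 q (Set.Icc 0 h) τ| := by
  classical
  -- choose bounding constants for the `v`-partials of the formal prolongations
  have hC : ∀ k : ℕ, ∃ C > 0, ∀ (g : ℕ → ℝ) (v : ℝ),
      (∀ i ≤ PC.ord (PC.dv (PC.Q k)), |g i| ≤ M) → |v| ≤ R →
      |PC.ev g v (PC.dv (PC.Q k))| ≤ C := fun k => PC.ev_bound M R hR (PC.dv (PC.Q k))
  set Ck : ℕ → ℝ := fun k => (hC k).choose with hCk
  have hCkpos : ∀ k, 0 < Ck k := fun k => (hC k).choose_spec.1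
  have hCkspec : ∀ k, ∀ (g : ℕ → ℝ) (v : ℝ),
      (∀ i ≤ PC.ord (PC.dv (PC.Q k)), |g i| ≤ M) → |v| ≤ R →
      |PC.ev g v (PC.dv (PC.Q k))| ≤ Ck k := fun k => (hC k).choose_spec.2
  refine ⟨∑ k ∈ Finset.range (n - 1), Ck k, ?_, ?_⟩
  · apply Finset.sum_pos (fun k _ => hCkpos k)
    exact ⟨0, Finset.mem_range.mpr (by omega)⟩
  intro h hh f hf hM q hq hode qd τ hτ hval hcol hqR hqdR j hj2 hjn
  set S := Set.Icc (0 : ℝ) h with hSdef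
  have hτS : τ ∈ S := by
    rcases hτ with hτ | hτ
    · rw [hτ]; exact Set.left_mem_Icc.mpr (le_of_lt hh)
    · rw [Set.mem_singleton_iff] at hτ; rw [hτ]; exact Set.right_mem_Icc.mpr (le_of_lt hh)
  set k := j - 2 with hk
  have hjk : j = k + 2 := by omega
  set g : ℕ → ℝ := fun i => iteratedDeriv i f (q τ) with hg
  set v : ℝ := iteratedDerivWithin 1 q S τ with hv
  set vd : ℝ := (Polynomial.derivative qd).eval τ with hvd
  -- polynomial side
  have hpoly : (Polynomial.derivative^[j] qd).eval τ = PC.ev g vd (PC.Q k) := by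
    rw [hcol j hj2 hjn, hval]
    exact PC.prolong_eq_ev hf k (by omega) (q τ) vd
  -- solution side
  have hsol : iteratedDerivWithin j q S τ = PC.ev g v (PC.Q k) := by
    rw [hjk]
    exact PC.solution_eq_ev hn hh hf hq hode k (by omega) τ hτS
  rw [hpoly, hsol]
  -- Lipschitz estimate in `v` via the mean value inequality
  have hgM : ∀ i ≤ PC.ord (PC.dv (PC.Q k)), |g i| ≤ M := by
    intro i hi
    apply hM i _ (q τ)
    have h1 : PC.ord (PC.dv (PC.Q k)) ≤ k := le_trans (PC.ord_dv _) (PC.ord_Q k)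
    omega
  have hIcc : ∀ w ∈ Set.Icc (-R) R,
      HasDerivWithinAt (fun w => PC.ev g w (PC.Q k)) (PC.ev g w (PC.dv (PC.Q k)))
        (Set.Icc (-R) R) w :=
    fun w _ => (PC.ev_hasDerivAt_v g (PC.Q k) w).hasDerivWithinAt
  have hbound : ∀ w ∈ Set.Icc (-R) R, ‖PC.ev g w (PC.dv (PC.Q k))‖ ≤ Ck k := by
    intro w hw
    rw [Real.norm_eq_abs]
    exact hCkspec k g w hgM (abs_le.mpr hw)
  have hvmem : v ∈ Set.Icc (-R) R := abs_le.mp hqR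
  have hvdmem : vd ∈ Set.Icc (-R) R := abs_le.mp hqdR
  have hmvt := (convex_Icc (-R) R).norm_image_sub_le_of_norm_hasDerivWithin_le
    hIcc hbound hvmem hvdmem
  rw [Real.norm_eq_abs, Real.norm_eq_abs] at hmvt
  refine le_trans hmvt ?_
  apply mul_le_mul_of_nonneg_right _ (abs_nonneg _)
  have hkmem : k ∈ Finset.range (n - 1) := Finset.mem_range.mpr (by omega)
  exact Finset.single_le_sum (fun i _ => le_of_lt (hCkpos i)) hkmem
end

section
/- Let n ≥ 2 be an integer, h > 0, and 1 ≤ j ≤ n−1. Then ∫_0^h H_{n,j}(t) dt = ∫_0^h H_{n,j}(h−t) dt = c_{n,j} h^{j+1}, where c_{n,j} = ∫_0^1 (u^j/j!)(1−u)^n ∑_{s=0}^{n−j−1} binom(n+s−1, s) u^s du is a strictly positive constant independent of h. -/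
/-- The two-point Hermite basis function
`H_{n,j}(t) = (t^j/j!) (1 - t/h)^n ∑_{s=0}^{n-j-1} C(n+s-1, s) (t/h)^s` on `[0, h]`. -/
noncomputable def hermiteBasis (n j : ℕ) (h t : ℝ) : ℝ :=
  t ^ j / (Nat.factorial j) * (1 - t / h) ^ n *
    ∑ s ∈ Finset.range (n - j), ((n + s - 1).choose s : ℝ) * (t / h) ^ s

/-- The constant `c_{n,j} = ∫_0^1 (u^j/j!)(1-u)^n ∑_{s=0}^{n-j-1} C(n+s-1, s) u^s du`. -/
noncomputable def hermiteBasisConst (n j : ℕ) : ℝ :=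
  ∫ u in (0:ℝ)..1,
    u ^ j / (Nat.factorial j) * (1 - u) ^ n *
      ∑ s ∈ Finset.range (n - j), ((n + s - 1).choose s : ℝ) * u ^ s

/-- **Integral of the two-point Hermite basis functions.**
For `n ≥ 2`, `1 ≤ j ≤ n - 1` and `h > 0`,
`∫_0^h H_{n,j}(t) dt = ∫_0^h H_{n,j}(h - t) dt = c_{n,j} h^{j+1}` where `c_{n,j} > 0` is
independent of `h`. -/
theorem integral_hermiteBasis
    (n j : ℕ) (hn : 2 ≤ n) (hj1 : 1 ≤ j) (hj2 : j ≤ n - 1) (h : ℝ) (hh : 0 < h) :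
    0 < hermiteBasisConst n j ∧
    (∫ t in (0:ℝ)..h, hermiteBasis n j h t) = hermiteBasisConst n j * h ^ (j + 1) ∧
    (∫ t in (0:ℝ)..h, hermiteBasis n j h (h - t)) = hermiteBasisConst n j * h ^ (j + 1) := by
  have hne : h ≠ 0 := hh.ne'
  set f : ℝ → ℝ := fun u => u ^ j / (Nat.factorial j) * (1 - u) ^ n *
      ∑ s ∈ Finset.range (n - j), ((n + s - 1).choose s : ℝ) * u ^ s with hf
  have hfc : Continuous f := by
    apply Continuous.mul
    · exact (continuous_pow j).div_const _ |>.mul ((continuous_const.sub continuous_id).pow n)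
    · exact continuous_finset_sum _ fun i _ => continuous_const.mul (continuous_pow i)
  have hHf : ∀ t, hermiteBasis n j h t = h ^ j * f (t / h) := by
    intro t
    simp only [hermiteBasis, hf]
    rw [div_pow]
    field_simp
  have hc : hermiteBasisConst n j = ∫ u in (0:ℝ)..1, f u := rfl
  have hpos : 0 < hermiteBasisConst n j := by
    rw [hc]
    apply intervalIntegral.intervalIntegral_pos_of_pos_on (hfc.intervalIntegrable _ _)
    · intro x hx
      have hx0 := hx.1
      have hx1 := hx.2
      apply mul_pos (mul_pos (by positivity) (pow_pos (by linarith) n))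
      apply Finset.sum_pos'
      · intro i _; positivity
      · refine ⟨0, ?_, ?_⟩
        · simp only [Finset.mem_range]; omega
        · simp
    · norm_num
  have key : (∫ t in (0:ℝ)..h, hermiteBasis n j h t)
      = hermiteBasisConst n j * h ^ (j + 1) := by
    simp only [hHf]
    rw [intervalIntegral.integral_const_mul, intervalIntegral.integral_comp_div _ hne]
    rw [zero_div, div_self hne, hc]
    simp [smul_eq_mul]
    ring
  refine ⟨hpos, key, ?_⟩
  rw [intervalIntegral.integral_comp_sub_left (hermiteBasis n j h) h]
  simpa using key
end

section
/- Let n ≥ 2 be an integer, 0 < h ≤ 1, and let q : [0,h] → ℝ be 2n-times continuously differentiable with |q^{(2n)}(t)| ≤ M for all t ∈ [0,h]. Let q_d be a real polynomial of degree at most 2n−1 such that q̈_d(0) = q̈(0), q̈_d(h) = q̈(h), and |q_d^{(j+2)}(τ) − q^{(j+2)}(τ)| ≤ δ for all j = 1, …, n−2 and τ ∈ {0, h}. Then there exists a constant C > 0 depending only on n such that | (q̇(h) − q̇_d(h)) − (q̇(0) − q̇_d(0)) | ≤ C ( δ h² + M h^{2n−1} ). -/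
open Polynomial Finset intervalIntegral

/-- Evaluation bound from coefficient bounds. -/
lemma aux_eval_bound {p : ℝ[X]} {B h τ : ℝ} {d : ℕ} (hd : p.natDegree ≤ d)
    (hB : ∀ i, |p.coeff i| ≤ B * h ^ (d - i)) (hτ0 : 0 ≤ τ) (hτ : τ ≤ h) :
    |p.eval τ| ≤ (d + 1) * B * h ^ d := by
  rw [eval_eq_sum_range' (lt_of_le_of_lt hd (Nat.lt_succ_self d))]
  calc |∑ i ∈ range (d + 1), p.coeff i * τ ^ i|
      ≤ ∑ i ∈ range (d + 1), |p.coeff i * τ ^ i| := Finset.abs_sum_le_sum_abs _ _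
    _ ≤ ∑ i ∈ range (d + 1), B * h ^ d := by
        refine Finset.sum_le_sum fun i hi => ?_
        have hi' : i ≤ d := Nat.lt_succ_iff.mp (Finset.mem_range.mp hi)
        rw [abs_mul, abs_pow, abs_of_nonneg hτ0]
        calc |p.coeff i| * τ ^ i ≤ (B * h ^ (d - i)) * h ^ i := by
              exact mul_le_mul (hB i) (pow_le_pow_left₀ hτ0 hτ i) (pow_nonneg hτ0 i)
                ((abs_nonneg _).trans (hB i))
          _ = B * h ^ d := by
              rw [mul_assoc, ← pow_add, Nat.sub_add_cancel hi']
    _ = (d + 1) * B * h ^ d := by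
        rw [Finset.sum_const, Finset.card_range]
        push_cast; ring

lemma aux_iter_coeff {p : ℝ[X]} {B h : ℝ} {d : ℕ} (hd : p.natDegree ≤ d)
    (hB0 : 0 ≤ B) (h0 : 0 ≤ h) (hd1 : 1 ≤ d)
    (hB : ∀ i, |p.coeff i| ≤ B * h ^ (d - i)) (j : ℕ) (i : ℕ) :
    |(derivative^[j] p).coeff i| ≤ ((d : ℝ) ^ d * B) * h ^ (d - j - i) := by
  rw [coeff_iterate_derivative]
  by_cases hij : i + j ≤ d
  · rw [nsmul_eq_mul, abs_mul, Nat.abs_cast]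
    have h1 : ((i + j).descFactorial j : ℝ) ≤ (d : ℝ) ^ d := by
      have : (i + j).descFactorial j ≤ d ^ d :=
        le_trans (Nat.descFactorial_le_pow _ _)
          (le_trans (Nat.pow_le_pow_left hij j) (Nat.pow_le_pow_right hd1 (by omega)))
      exact_mod_cast this
    have h2 : |p.coeff (i + j)| ≤ B * h ^ (d - j - i) := by
      have := hB (i + j)
      have he : d - (i + j) = d - j - i := by omega
      rwa [he] at this
    calc ((i + j).descFactorial j : ℝ) * |p.coeff (i + j)|
        ≤ (d : ℝ) ^ d * (B * h ^ (d - j - i)) := by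
          exact mul_le_mul h1 h2 (abs_nonneg _) (by positivity)
      _ = ((d : ℝ) ^ d * B) * h ^ (d - j - i) := by ring
  · have : p.coeff (i + j) = 0 := coeff_eq_zero_of_natDegree_lt (by omega)
    rw [this]
    simp only [smul_zero, abs_zero]
    positivity

lemma aux_iter_eval_bound {p : ℝ[X]} {B h τ : ℝ} {d : ℕ} (hd : p.natDegree ≤ d)
    (hB0 : 0 ≤ B) (hd1 : 1 ≤ d)
    (hB : ∀ i, |p.coeff i| ≤ B * h ^ (d - i)) (j : ℕ)
    (hτ0 : 0 ≤ τ) (hτ : τ ≤ h) :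
    |(derivative^[j] p).eval τ| ≤ ((d : ℝ) + 1) * ((d : ℝ) ^ d * B) * h ^ (d - j) := by
  have h0 : (0 : ℝ) ≤ h := hτ0.trans hτ
  have hdeg : (derivative^[j] p).natDegree ≤ d - j :=
    (natDegree_iterate_derivative p j).trans (Nat.sub_le_sub_right hd j)
  have h1 := aux_eval_bound (p := derivative^[j] p) (B := (d : ℝ) ^ d * B) (h := h)
    (d := d - j) hdeg (fun i => aux_iter_coeff hd hB0 h0 hd1 hB j i) hτ0 hτ
  refine h1.trans ?_
  have hc : ((d - j : ℕ) : ℝ) + 1 ≤ (d : ℝ) + 1 := by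
    have : ((d - j : ℕ) : ℝ) ≤ (d : ℝ) := by exact_mod_cast Nat.sub_le d j
    linarith
  have hBnn : (0:ℝ) ≤ (d : ℝ) ^ d * B := by positivity
  exact mul_le_mul_of_nonneg_right (mul_le_mul_of_nonneg_right hc hBnn) (by positivity)

/-- Derivatives of order `< e` of `(X - C c)^e * r` vanish at `c`. -/
lemma aux_vanish (c : ℝ) (e k : ℕ) (hk : k < e) (r : ℝ[X]) :
    (derivative^[k] ((X - C c) ^ e * r)).eval c = 0 := by
  rw [iterate_derivative_mul]
  rw [eval_finset_sum]
  refine Finset.sum_eq_zero fun i hi => ?_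
  have hik : i ≤ k := Nat.lt_succ_iff.mp (Finset.mem_range.mp hi)
  rw [iterate_derivative_X_sub_pow]
  simp [sub_self, zero_pow (by omega : e - (k - i) ≠ 0)]

/-- FTC on `[0, h]` for functions with a continuous within-derivative. -/
lemma aux_ftc {h : ℝ} (hh : 0 < h) {F F' : ℝ → ℝ}
    (hF : ∀ t ∈ Set.Icc (0:ℝ) h, HasDerivWithinAt F (F' t) (Set.Icc (0:ℝ) h) t)
    (hF' : ContinuousOn F' (Set.Icc (0:ℝ) h)) :
    ∫ t in (0:ℝ)..h, F' t = F h - F 0 := by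
  refine integral_eq_sub_of_hasDeriv_right_of_le hh.le
    (fun t ht => (hF t ht).continuousWithinAt) (fun x hx => ?_) ?_
  · exact ((hF x (Set.mem_Icc_of_Ioo hx)).hasDerivAt (Icc_mem_nhds hx.1 hx.2)).hasDerivWithinAt
  · exact (hF'.mono (by rw [Set.uIcc_of_le hh.le])).intervalIntegrable

lemma nat_choose_le_two_pow (a b : ℕ) : a.choose b ≤ 2 ^ a := by
  by_cases hb : b ≤ a
  · calc a.choose b ≤ ∑ i ∈ range (a + 1), a.choose i :=
        Finset.single_le_sum (f := fun i => a.choose i) (fun i _ => Nat.zero_le _)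
          (Finset.mem_range.mpr (by omega))
      _ = 2 ^ a := Nat.sum_range_choose a
  · rw [Nat.choose_eq_zero_of_lt (by omega)]; exact Nat.zero_le _

lemma aux_P_coeff {n : ℕ} (hn : 2 ≤ n) {h : ℝ} (h0 : 0 ≤ h) (i : ℕ) :
    |(((X - C h) ^ (n - 1) * X ^ (n - 1) : ℝ[X])).coeff i| ≤
      (2 : ℝ) ^ n * h ^ (2 * n - 2 - i) := by
  rw [coeff_mul_X_pow']
  by_cases hi : n - 1 ≤ i
  · rw [if_pos hi]
    rw [sub_eq_add_neg, ← C_neg, coeff_X_add_C_pow]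
    by_cases him : i ≤ 2 * n - 2
    · have he : (n - 1) - (i - (n - 1)) = 2 * n - 2 - i := by omega
      rw [abs_mul, abs_pow, abs_neg, abs_of_nonneg h0, he, Nat.abs_cast]
      have hch : ((n - 1).choose (i - (n - 1)) : ℝ) ≤ (2 : ℝ) ^ n := by
        calc ((n - 1).choose (i - (n - 1)) : ℝ) ≤ ((2 ^ (n - 1) : ℕ) : ℝ) := by
              exact_mod_cast nat_choose_le_two_pow (n - 1) (i - (n - 1))
          _ ≤ (2 : ℝ) ^ n := by
              push_cast
              exact pow_le_pow_right₀ one_le_two (by omega)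
      calc h ^ (2 * n - 2 - i) * ((n - 1).choose (i - (n - 1)) : ℝ)
          ≤ h ^ (2 * n - 2 - i) * (2 : ℝ) ^ n :=
            mul_le_mul_of_nonneg_left hch (by positivity)
        _ = (2 : ℝ) ^ n * h ^ (2 * n - 2 - i) := by ring
    · rw [Nat.choose_eq_zero_of_lt (by omega)]
      simp only [Nat.cast_zero, mul_zero, abs_zero]
      positivity
  · rw [if_neg hi, abs_zero]
    positivity

lemma aux_P_natDegree {n : ℕ} (hn : 2 ≤ n) (h : ℝ) :
    ((X - C h) ^ (n - 1) * X ^ (n - 1) : ℝ[X]).natDegree = 2 * n - 2 := by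
  rw [((monic_X_sub_C h).pow _).natDegree_mul (monic_X_pow _), natDegree_pow,
    natDegree_X_sub_C, natDegree_X_pow]
  omega

lemma aux_P_top_deriv {n : ℕ} (hn : 2 ≤ n) (h : ℝ) :
    derivative^[2 * n - 2] ((X - C h) ^ (n - 1) * X ^ (n - 1) : ℝ[X]) =
      C (((2 * n - 2).factorial : ℝ)) := by
  set P : ℝ[X] := (X - C h) ^ (n - 1) * X ^ (n - 1) with hP
  have hdeg : P.natDegree = 2 * n - 2 := aux_P_natDegree hn h
  have hmono : P.Monic := ((monic_X_sub_C h).pow _).mul (monic_X_pow _)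
  have h0 : (derivative^[2 * n - 2] P).natDegree ≤ 0 := by
    refine (natDegree_iterate_derivative P _).trans ?_
    omega
  rw [eq_C_of_natDegree_le_zero h0, coeff_iterate_derivative]
  have hc : P.coeff (2 * n - 2) = 1 := by
    rw [← hdeg]; exact hmono.coeff_natDegree
  rw [zero_add, hc, Nat.descFactorial_self]
  simp



/-- **Integrated Hermite-remainder estimate for the velocity defect.**
Let `n ≥ 2`.  There is a constant `C > 0`, depending only on `n`, such that for every
`0 < h ≤ 1`, every `2n`-times continuously differentiable `q` on `[0, h]` with
`|q^{(2n)}| ≤ M` on `[0, h]`, `0 ≤ δ`, and every polynomial `q_d` of degree at most `2n - 1` with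
`q̈_d(0) = q̈(0)`, `q̈_d(h) = q̈(h)` and `|q_d^{(j+2)}(τ) - q^{(j+2)}(τ)| ≤ δ` for all
`j = 1, …, n-2` and `τ ∈ {0, h}`, one has
`|(q̇(h) - q̇_d(h)) - (q̇(0) - q̇_d(0))| ≤ C (δ h² + M h^{2n-1})`. -/
theorem velocity_defect_estimate (n : ℕ) (hn : 2 ≤ n) :
    ∃ C > 0,
      ∀ h : ℝ, 0 < h → h ≤ 1 →
      ∀ M δ : ℝ, 0 ≤ δ →
      ∀ q : ℝ → ℝ, ContDiffOn ℝ ((2 * n : ℕ) : ℕ∞) q (Set.Icc 0 h) →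
        (∀ t ∈ Set.Icc (0 : ℝ) h, |iteratedDerivWithin (2 * n) q (Set.Icc 0 h) t| ≤ M) →
      ∀ qd : Polynomial ℝ, qd.natDegree ≤ 2 * n - 1 →
        (Polynomial.derivative^[2] qd).eval 0 = iteratedDerivWithin 2 q (Set.Icc 0 h) 0 →
        (Polynomial.derivative^[2] qd).eval h = iteratedDerivWithin 2 q (Set.Icc 0 h) h →
        (∀ j : ℕ, 1 ≤ j → j ≤ n - 2 → ∀ τ ∈ ({0, h} : Set ℝ),
          |(Polynomial.derivative^[j + 2] qd).eval τ -
              iteratedDerivWithin (j + 2) q (Set.Icc 0 h) τ| ≤ δ) →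
        |(iteratedDerivWithin 1 q (Set.Icc 0 h) h - (Polynomial.derivative qd).eval h) -
            (iteratedDerivWithin 1 q (Set.Icc 0 h) 0 - (Polynomial.derivative qd).eval 0)| ≤
          C * (δ * h ^ 2 + M * h ^ (2 * n - 1)) := by
  have hm2 : 2 ≤ 2 * n - 2 := by omega
  set m : ℕ := 2 * n - 2 with hm
  have hmR : (0 : ℝ) < (m : ℝ) := by exact_mod_cast (by omega : 0 < m)
  set A : ℝ := ((m : ℝ) + 1) * ((m : ℝ) ^ m * (2 : ℝ) ^ n) with hA
  have hA0 : 0 < A := by positivity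
  refine ⟨2 * m * A + A, by positivity, ?_⟩
  intro h hh hh1 M δ hδ q hq hM qd hqd hq20 hq2h hqj
  set I : Set ℝ := Set.Icc (0 : ℝ) h with hIdef
  have hUD : UniqueDiffOn ℝ I := uniqueDiffOn_Icc hh
  have hMnn : 0 ≤ M := (abs_nonneg _).trans (hM 0 ⟨le_refl 0, hh.le⟩)
  set D : ℕ → ℝ → ℝ :=
    fun i t => iteratedDerivWithin i q I t - (derivative^[i] qd).eval t with hDdef
  -- derivative structure of the defects
  have hD : ∀ i, i < 2 * n → ∀ t ∈ I, HasDerivWithinAt (D i) (D (i + 1) t) I t := by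
    intro i hi t ht
    have hdiff : DifferentiableWithinAt ℝ (iteratedDerivWithin i q I) I t :=
      (hq.differentiableOn_iteratedDerivWithin (by exact_mod_cast hi) hUD) t ht
    have h1 : HasDerivWithinAt (iteratedDerivWithin i q I)
        (iteratedDerivWithin (i + 1) q I t) I t := by
      have := hdiff.hasDerivWithinAt
      rwa [← iteratedDerivWithin_succ] at this
    have h2 : HasDerivWithinAt (fun s => (derivative^[i] qd).eval s)
        ((derivative^[i + 1] qd).eval t) I t := by
      rw [Function.iterate_succ_apply']
      exact ((derivative^[i] qd).hasDerivAt t).hasDerivWithinAt (s := I)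
    exact h1.sub h2
  have hDc : ∀ i, i ≤ 2 * n → ContinuousOn (D i) I := by
    intro i hi
    exact (hq.continuousOn_iteratedDerivWithin (by exact_mod_cast hi) hUD).sub
      (derivative^[i] qd).continuous_aeval.continuousOn
  -- the kernel polynomial
  set P : ℝ[X] := (X - C h) ^ (n - 1) * X ^ (n - 1) with hPdef
  have hPbound : ∀ j : ℕ, ∀ τ : ℝ, 0 ≤ τ → τ ≤ h →
      |(derivative^[j] P).eval τ| ≤ A * h ^ (m - j) := by
    intro j τ h1 h2
    have := aux_iter_eval_bound (p := P) (B := (2 : ℝ) ^ n) (d := m) (τ := τ) (h := h)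
      (le_of_eq (aux_P_natDegree hn h)) (by positivity) (by omega)
      (fun i => aux_P_coeff hn hh.le i) j h1 h2
    exact this
  have hPvanishh : ∀ j : ℕ, j < n - 1 → (derivative^[j] P).eval h = 0 := by
    intro j hj
    exact aux_vanish h (n - 1) j hj _
  have hPvanish0 : ∀ j : ℕ, j < n - 1 → (derivative^[j] P).eval 0 = 0 := by
    intro j hj
    have hP0 : P = (X - C (0 : ℝ)) ^ (n - 1) * (X - C h) ^ (n - 1) := by
      rw [hPdef, C_0, sub_zero, mul_comm]
    rw [hP0]
    exact aux_vanish 0 (n - 1) j hj _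
  have hPm : ∀ t : ℝ, (derivative^[m] P).eval t = (m.factorial : ℝ) := by
    intro t
    rw [hPdef, hm, aux_P_top_deriv hn h, eval_C]
  -- the integrated-by-parts potential
  set G : ℝ → ℝ := fun t => ∑ i ∈ Finset.range m,
    (-1 : ℝ) ^ i * ((derivative^[m - 1 - i] P).eval t * D (i + 2) t) with hGdef
  set G' : ℝ → ℝ := fun t =>
    (m.factorial : ℝ) * D 2 t - (-1 : ℝ) ^ m * (P.eval t * D (m + 2) t) with hG'def
  have hGderiv : ∀ t ∈ I, HasDerivWithinAt G (G' t) I t := by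
    intro t ht
    have hterm : ∀ i ∈ Finset.range m, HasDerivWithinAt
        (fun s => (-1 : ℝ) ^ i * ((derivative^[m - 1 - i] P).eval s * D (i + 2) s))
        ((-1 : ℝ) ^ i * ((derivative^[m - i] P).eval t * D (i + 2) t
          + (derivative^[m - 1 - i] P).eval t * D (i + 3) t)) I t := by
      intro i hi
      have him : i < m := Finset.mem_range.mp hi
      have hp : HasDerivWithinAt (fun s => (derivative^[m - 1 - i] P).eval s)
          ((derivative^[m - i] P).eval t) I t := by
        rw [(by omega : m - i = m - 1 - i + 1), Function.iterate_succ_apply']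
        exact ((derivative^[m - 1 - i] P).hasDerivAt t).hasDerivWithinAt (s := I)
      have hd : HasDerivWithinAt (D (i + 2)) (D (i + 3) t) I t := by
        have := hD (i + 2) (by omega) t ht
        rwa [(by omega : i + 2 + 1 = i + 3)] at this
      exact (hp.mul hd).const_mul _
    have hsum := HasDerivWithinAt.sum hterm
    have hkey : ∑ i ∈ Finset.range m, (-1 : ℝ) ^ i *
        ((derivative^[m - i] P).eval t * D (i + 2) t
          + (derivative^[m - 1 - i] P).eval t * D (i + 3) t) = G' t := by
      have h1 : ∀ i ∈ Finset.range m, (-1 : ℝ) ^ i *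
          ((derivative^[m - i] P).eval t * D (i + 2) t
            + (derivative^[m - 1 - i] P).eval t * D (i + 3) t)
          = (fun k => (-1 : ℝ) ^ k * ((derivative^[m - k] P).eval t * D (k + 2) t)) i
            - (fun k => (-1 : ℝ) ^ k * ((derivative^[m - k] P).eval t * D (k + 2) t)) (i + 1) := by
        intro i hi
        have him : i < m := Finset.mem_range.mp hi
        simp only
        rw [(by omega : m - (i + 1) = m - 1 - i), (by omega : i + 1 + 2 = i + 3), pow_succ]
        ring
      rw [Finset.sum_congr rfl h1,
        Finset.sum_range_sub' (fun k => (-1 : ℝ) ^ k * ((derivative^[m - k] P).eval t * D (k + 2) t)) m]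
      simp only [hG'def]
      rw [Nat.sub_zero, Nat.sub_self, Function.iterate_zero_apply, hPm t]
      norm_num
    rw [← hkey]
    have hGfun : G = ∑ i ∈ Finset.range m,
        fun s => (-1 : ℝ) ^ i * ((derivative^[m - 1 - i] P).eval s * D (i + 2) s) := by
      funext s
      rw [Finset.sum_apply]
    rw [hGfun]
    exact hsum
  have hGc' : ContinuousOn G' I := by
    rw [hG'def]
    exact (continuousOn_const.mul (hDc 2 (by omega))).sub
      (continuousOn_const.mul (P.continuous_aeval.continuousOn.mul (hDc (m + 2) (by omega))))
  have hint1 : ∫ t in (0:ℝ)..h, G' t = G h - G 0 := aux_ftc hh hGderiv hGc'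
  have hint2 : ∫ t in (0:ℝ)..h, D 2 t = D 1 h - D 1 0 := by
    refine aux_ftc hh (fun t ht => ?_) (hDc 2 (by omega))
    have := hD 1 (by omega) t ht
    rwa [(by omega : 1 + 1 = 2)] at this
  have hiPD : IntervalIntegrable (fun t => P.eval t * D (m + 2) t) MeasureTheory.volume 0 h := by
    refine ContinuousOn.intervalIntegrable ?_
    refine (P.continuous_aeval.continuousOn.mul (hDc (m + 2) (by omega))).mono ?_
    rw [Set.uIcc_of_le hh.le]
  have hiD2 : IntervalIntegrable (D 2) MeasureTheory.volume 0 h := by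
    refine ContinuousOn.intervalIntegrable ?_
    refine (hDc 2 (by omega)).mono ?_
    rw [Set.uIcc_of_le hh.le]
  have hsplit : ∫ t in (0:ℝ)..h, G' t
      = ((m.factorial : ℝ) * ∫ t in (0:ℝ)..h, D 2 t)
        - (-1 : ℝ) ^ m * ∫ t in (0:ℝ)..h, P.eval t * D (m + 2) t := by
    rw [hG'def]
    rw [intervalIntegral.integral_sub (hiD2.const_mul _) (hiPD.const_mul _),
      intervalIntegral.integral_const_mul, intervalIntegral.integral_const_mul]
  have hmain : (m.factorial : ℝ) * (D 1 h - D 1 0)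
      = (G h - G 0) + (-1 : ℝ) ^ m * ∫ t in (0:ℝ)..h, P.eval t * D (m + 2) t := by
    have e1 := hint1
    rw [hsplit] at e1
    rw [← hint2]
    linarith [e1]
  -- bounds on the boundary terms
  have hbnd : ∀ τ : ℝ, 0 ≤ τ → τ ≤ h → τ ∈ ({0, h} : Set ℝ) → D 2 τ = 0 →
      (∀ j : ℕ, j < n - 1 → (derivative^[j] P).eval τ = 0) →
      |G τ| ≤ m * (A * (δ * h ^ 2)) := by
    intro τ hτ0 hτh hτmem hD2 hvan
    have hrhs0 : (0 : ℝ) ≤ A * (δ * h ^ 2) :=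
      mul_nonneg hA0.le (mul_nonneg hδ (by positivity))
    rw [hGdef]
    refine (Finset.abs_sum_le_sum_abs _ _).trans ?_
    have hterm : ∀ i ∈ Finset.range m,
        |(-1 : ℝ) ^ i * ((derivative^[m - 1 - i] P).eval τ * D (i + 2) τ)|
          ≤ A * (δ * h ^ 2) := by
      intro i hi
      have him : i < m := Finset.mem_range.mp hi
      rw [abs_mul, abs_pow, abs_neg, abs_one, one_pow, one_mul, abs_mul]
      by_cases hi0 : i = 0
      · subst hi0
        rw [zero_add, hD2, abs_zero, mul_zero]
        exact hrhs0
      · by_cases hile : i ≤ n - 2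
        · have hPb : |(derivative^[m - 1 - i] P).eval τ| ≤ A * h ^ 2 := by
            have h1 := hPbound (m - 1 - i) τ hτ0 hτh
            rw [(by omega : m - (m - 1 - i) = i + 1)] at h1
            refine h1.trans ?_
            have h2 : h ^ (i + 1) ≤ h ^ 2 := pow_le_pow_of_le_one hh.le hh1 (by omega)
            exact mul_le_mul_of_nonneg_left h2 hA0.le
          have hDb : |D (i + 2) τ| ≤ δ := by
            have h3 := hqj i (by omega) hile τ hτmem
            rw [hDdef]
            simp only
            rw [abs_sub_comm]
            exact h3
          calc |(derivative^[m - 1 - i] P).eval τ| * |D (i + 2) τ|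
              ≤ (A * h ^ 2) * δ :=
                mul_le_mul hPb hDb (abs_nonneg _) (by positivity)
            _ = A * (δ * h ^ 2) := by ring
        · rw [hvan (m - 1 - i) (by omega), abs_zero, zero_mul]
          exact hrhs0
    refine (Finset.sum_le_sum hterm).trans ?_
    rw [Finset.sum_const, Finset.card_range, nsmul_eq_mul]
  have hD2h : D 2 h = 0 := by
    rw [hDdef]; simp only
    rw [hq2h]; ring
  have hD20 : D 2 0 = 0 := by
    rw [hDdef]; simp only
    rw [hq20]; ring
  have hGh : |G h| ≤ m * (A * (δ * h ^ 2)) :=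
    hbnd h hh.le le_rfl (by simp) hD2h hPvanishh
  have hG0 : |G 0| ≤ m * (A * (δ * h ^ 2)) :=
    hbnd 0 le_rfl hh.le (by simp) hD20 hPvanish0
  -- bound on the integral remainder
  have hintb : |∫ t in (0:ℝ)..h, P.eval t * D (m + 2) t| ≤ A * h ^ m * M * h := by
    have hb : ∀ x ∈ Set.uIoc (0 : ℝ) h, ‖P.eval x * D (m + 2) x‖ ≤ A * h ^ m * M := by
      intro x hx
      rw [Set.uIoc_of_le hh.le] at hx
      have hx0 : 0 ≤ x := hx.1.le
      have hxh : x ≤ h := hx.2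
      have h1 : |P.eval x| ≤ A * h ^ m := by
        have := hPbound 0 x hx0 hxh
        rwa [Function.iterate_zero_apply, Nat.sub_zero] at this
      have h2 : |D (m + 2) x| ≤ M := by
        rw [hDdef]
        simp only
        rw [iterate_derivative_eq_zero (by omega : qd.natDegree < m + 2), eval_zero, sub_zero,
          (by omega : m + 2 = 2 * n)]
        exact hM x ⟨hx0, hxh⟩
      rw [Real.norm_eq_abs, abs_mul]
      exact mul_le_mul h1 h2 (abs_nonneg _) (by positivity)
    have h4 := intervalIntegral.norm_integral_le_of_norm_le_const hb
    rw [Real.norm_eq_abs, sub_zero, abs_of_nonneg hh.le] at h4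
    exact h4
  -- final assembly
  have hgoal_eq : (iteratedDerivWithin 1 q I h - (derivative qd).eval h)
      - (iteratedDerivWithin 1 q I 0 - (derivative qd).eval 0) = D 1 h - D 1 0 := by
    simp only [hDdef, Function.iterate_one]
  rw [hgoal_eq]
  have hfac1 : (1 : ℝ) ≤ (m.factorial : ℝ) := by
    exact_mod_cast Nat.one_le_iff_ne_zero.mpr (Nat.factorial_ne_zero m)
  calc |D 1 h - D 1 0|
      ≤ (m.factorial : ℝ) * |D 1 h - D 1 0| := le_mul_of_one_le_left (abs_nonneg _) hfac1
    _ = |(m.factorial : ℝ) * (D 1 h - D 1 0)| := by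
        rw [abs_mul, Nat.abs_cast]
    _ = |(G h - G 0) + (-1 : ℝ) ^ m * ∫ t in (0:ℝ)..h, P.eval t * D (m + 2) t| := by
        rw [hmain]
    _ ≤ |G h - G 0| + |(-1 : ℝ) ^ m * ∫ t in (0:ℝ)..h, P.eval t * D (m + 2) t| := abs_add_le _ _
    _ ≤ (|G h| + |G 0|) + |∫ t in (0:ℝ)..h, P.eval t * D (m + 2) t| := by
        refine add_le_add (abs_sub _ _) ?_
        rw [abs_mul, abs_pow, abs_neg, abs_one, one_pow, one_mul]
    _ ≤ (m * (A * (δ * h ^ 2)) + m * (A * (δ * h ^ 2))) + A * h ^ m * M * h :=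
        add_le_add (add_le_add hGh hG0) hintb
    _ ≤ (2 * m * A + A) * (δ * h ^ 2 + M * h ^ (2 * n - 1)) := by
        have hp : h ^ (2 * n - 1) = h ^ m * h := by
          rw [(by omega : 2 * n - 1 = m + 1), pow_succ]
        rw [hp]
        have p1 : (0 : ℝ) ≤ A * (δ * h ^ 2) :=
          mul_nonneg hA0.le (mul_nonneg hδ (by positivity))
        have p2 : (0 : ℝ) ≤ (m : ℝ) * (A * (M * (h ^ m * h))) := by
          have : (0 : ℝ) ≤ h ^ m * h := by positivity
          have := mul_nonneg hMnn this
          positivity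
        nlinarith [p1, p2]
end

section
/- Let n ≥ 2 be an integer, 0 < h ≤ 1, and let f : ℝ → ℝ be of class C^{n−2} with all derivatives of order 0 through n−2 bounded in absolute value by M₀ on ℝ. Let F_j (2 ≤ j ≤ n) be the prolongation functions of f. Let q : [0,h] → ℝ be a 2n-times continuously differentiable solution of q̈(t) = f(q(t)) with |q^{(2n)}(t)| ≤ M on [0,h], and let q_d be a real polynomial of degree at most 2n−1 satisfying q_d(0) = q(0), q_d(h) = q(h), and the prolongation-collocation conditions q_d^{(j)}(τ) = F_j(q_d(τ), q̇_d(τ)) for all j = 2, …, n and τ ∈ {0, h}. Let R > 0 be such that |q̇(τ)| ≤ R and |q̇_d(τ)| ≤ R for τ ∈ {0,h}, and suppose there exist constants K > 0 and p ≥ 1 such that |q̇_d(τ) − q̇(τ)| ≤ K h^p for τ ∈ {0, h}. Then there exists a constant C > 0 depending only on n, M₀, M, R, and K such that | (q̇_d(h) − q̇(h)) − (q̇_d(0) − q̇(0)) | ≤ C h^{min(p+2, 2n−1)}. -/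
namespace VDB

inductive Expr where
  | cst : ℝ → Expr
  | var : Expr
  | fd : ℕ → Expr
  | add : Expr → Expr → Expr
  | mul : Expr → Expr → Expr

noncomputable def ev (f : ℝ → ℝ) : Expr → ℝ → ℝ → ℝ
  | .cst r, _, _ => r
  | .var, _, v => v
  | .fd b, x, _ => iteratedDeriv b f x
  | .add e₁ e₂, x, v => ev f e₁ x v + ev f e₂ x v
  | .mul e₁ e₂, x, v => ev f e₁ x v * ev f e₂ x v

def ord : Expr → ℕ
  | .cst _ => 0
  | .var => 0
  | .fd b => b
  | .add e₁ e₂ => max (ord e₁) (ord e₂)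
  | .mul e₁ e₂ => max (ord e₁) (ord e₂)

def dX : Expr → Expr
  | .cst _ => .cst 0
  | .var => .cst 0
  | .fd b => .fd (b + 1)
  | .add e₁ e₂ => .add (dX e₁) (dX e₂)
  | .mul e₁ e₂ => .add (.mul (dX e₁) e₂) (.mul e₁ (dX e₂))

def dV : Expr → Expr
  | .cst _ => .cst 0
  | .var => .cst 1
  | .fd _ => .cst 0
  | .add e₁ e₂ => .add (dV e₁) (dV e₂)
  | .mul e₁ e₂ => .add (.mul (dV e₁) e₂) (.mul e₁ (dV e₂))

lemma ord_dX : ∀ e, ord (dX e) ≤ ord e + 1 := by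
  intro e; induction e <;> simp [dX, ord, *] <;> omega

lemma ord_dV : ∀ e, ord (dV e) ≤ ord e := by
  intro e; induction e <;> simp [dV, ord, *] <;> omega

variable {f : ℝ → ℝ} {m : ℕ}

lemma ev_hasFDerivAt (hf : ContDiff ℝ (m : ℕ∞) f) :
    ∀ (e : Expr), ord e < m → ∀ (x v : ℝ),
    HasFDerivAt (fun p : ℝ × ℝ => ev f e p.1 p.2)
      (ev f (dX e) x v • ContinuousLinearMap.fst ℝ ℝ ℝ +
        ev f (dV e) x v • ContinuousLinearMap.snd ℝ ℝ ℝ) (x, v) := by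
  intro e
  induction e with
  | cst r =>
    intro _ x v
    have : (ev f (dX (.cst r)) x v • ContinuousLinearMap.fst ℝ ℝ ℝ +
        ev f (dV (.cst r)) x v • ContinuousLinearMap.snd ℝ ℝ ℝ) = 0 := by
      ext p <;> simp [dX, dV, ev]
    rw [this]; exact hasFDerivAt_const _ _
  | var =>
    intro _ x v
    have : (ev f (dX .var) x v • ContinuousLinearMap.fst ℝ ℝ ℝ +
        ev f (dV .var) x v • ContinuousLinearMap.snd ℝ ℝ ℝ)
        = ContinuousLinearMap.snd ℝ ℝ ℝ := by
      ext p <;> simp [dX, dV, ev]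
    rw [this]; exact hasFDerivAt_snd
  | fd b =>
    intro hb x v
    simp only [ord] at hb
    have hd : HasDerivAt (iteratedDeriv b f) (iteratedDeriv (b + 1) f x) x := by
      have : Differentiable ℝ (iteratedDeriv b f) :=
        hf.differentiable_iteratedDeriv b (by exact_mod_cast hb)
      simpa [iteratedDeriv_succ] using (this x).hasDerivAt
    have := hd.hasFDerivAt.comp (x, v) (hasFDerivAt_fst (𝕜 := ℝ) (E := ℝ) (F := ℝ) (p := (x, v)))
    refine this.congr_fderiv ?_
    ext p <;> simp [dX, dV, ev, mul_comm]
  | add e₁ e₂ ih₁ ih₂ =>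
    intro hlt x v
    simp only [ord, max_lt_iff] at hlt
    have h := (ih₁ hlt.1 x v).add (ih₂ hlt.2 x v)
    refine h.congr_fderiv ?_
    ext p <;> simp [dX, dV, ev] <;> ring
  | mul e₁ e₂ ih₁ ih₂ =>
    intro hlt x v
    simp only [ord, max_lt_iff] at hlt
    have h := (ih₁ hlt.1 x v).mul (ih₂ hlt.2 x v)
    refine h.congr_fderiv ?_
    ext p <;> simp [dX, dV, ev] <;> ring


lemma ev_hasDerivAt_x (hf : ContDiff ℝ (m : ℕ∞) f) (e : Expr) (he : ord e < m) (x v : ℝ) :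
    HasDerivAt (fun y => ev f e y v) (ev f (dX e) x v) x := by
  have h := (ev_hasFDerivAt hf e he x v).comp_hasDerivAt x
    ((hasDerivAt_id x).prodMk (hasDerivAt_const x v))
  simp at h; exact h

lemma ev_hasDerivAt_v (hf : ContDiff ℝ (m : ℕ∞) f) (e : Expr) (he : ord e < m) (x v : ℝ) :
    HasDerivAt (fun w => ev f e x w) (ev f (dV e) x v) v := by
  have h := (ev_hasFDerivAt hf e he x v).comp_hasDerivAt v
    ((hasDerivAt_const v x).prodMk (hasDerivAt_id v))
  simp at h; exact h

/-- the expression for `prolong f k` -/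
def P : ℕ → Expr
  | 0 => .fd 0
  | k + 1 => .add (.mul .var (dX (P k))) (.mul (.fd 0) (dV (P k)))

lemma ord_P : ∀ k, ord (P k) ≤ k := by
  intro k
  induction k with
  | zero => simp [P, ord]
  | succ k ih =>
    simp only [P, ord, max_le_iff]
    exact ⟨⟨by omega, (ord_dX _).trans (by omega)⟩, by omega,
      (ord_dV _).trans (by omega)⟩

lemma prolong_eq (hf : ContDiff ℝ (m : ℕ∞) f) :
    ∀ k, k ≤ m → ∀ x v, prolong f k x v = ev f (P k) x v := by
  intro k
  induction k with
  | zero => intro _ x v; simp [prolong, P, ev, iteratedDeriv_zero]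
  | succ k ih =>
    intro hk x v
    have hk' : k < m := by omega
    have hord : ord (P k) < m := lt_of_le_of_lt (ord_P k) hk'
    have h1 : deriv (fun y => prolong f k y v) x = ev f (dX (P k)) x v := by
      have : (fun y => prolong f k y v) = fun y => ev f (P k) y v := by
        funext y; exact ih (le_of_lt hk') y v
      rw [this]; exact (ev_hasDerivAt_x hf _ hord x v).deriv
    have h2 : deriv (fun w => prolong f k x w) v = ev f (dV (P k)) x v := by
      have : (fun w => prolong f k x w) = fun w => ev f (P k) x w := by
        funext w; exact ih (le_of_lt hk') x w
      rw [this]; exact (ev_hasDerivAt_v hf _ hord x v).deriv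
    show v * deriv (fun y => prolong f k y v) x + f x * deriv (fun w => prolong f k x w) v = _
    rw [h1, h2]
    simp [P, ev, iteratedDeriv_zero]


/-- structural bound -/
def Bnd (B R : ℝ) : Expr → ℝ
  | .cst r => |r|
  | .var => R
  | .fd _ => B
  | .add e₁ e₂ => Bnd B R e₁ + Bnd B R e₂
  | .mul e₁ e₂ => Bnd B R e₁ * Bnd B R e₂

/-- structural Lipschitz constant in `v` -/
def Lip (B R : ℝ) : Expr → ℝ
  | .cst _ => 0
  | .var => 1
  | .fd _ => 0
  | .add e₁ e₂ => Lip B R e₁ + Lip B R e₂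
  | .mul e₁ e₂ => Bnd B R e₁ * Lip B R e₂ + Bnd B R e₂ * Lip B R e₁

lemma Bnd_nonneg {B R : ℝ} (hB : 0 ≤ B) (hR : 0 ≤ R) : ∀ e, 0 ≤ Bnd B R e := by
  intro e; induction e <;> simp [Bnd, *] <;> positivity

lemma Lip_nonneg {B R : ℝ} (hB : 0 ≤ B) (hR : 0 ≤ R) : ∀ e, 0 ≤ Lip B R e := by
  intro e
  induction e with
  | cst r => simp [Lip]
  | var => simp [Lip]
  | fd b => simp [Lip]
  | add e₁ e₂ ih₁ ih₂ => simp only [Lip]; positivity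
  | mul e₁ e₂ ih₁ ih₂ =>
    simp only [Lip]
    have := Bnd_nonneg hB hR e₁; have := Bnd_nonneg hB hR e₂
    positivity

lemma ev_est {B R : ℝ} (hB : ∀ i ≤ m, ∀ x : ℝ, |iteratedDeriv i f x| ≤ B) :
    ∀ e, ord e ≤ m →
      (∀ x v : ℝ, |v| ≤ R → |ev f e x v| ≤ Bnd B R e) ∧
      (∀ x v w : ℝ, |v| ≤ R → |w| ≤ R →
        |ev f e x v - ev f e x w| ≤ Lip B R e * |v - w|) := by
  intro e
  induction e with
  | cst r => exact fun _ => ⟨fun x v _ => le_refl _, fun x v w _ _ => by simp [ev, Lip]⟩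
  | var => exact fun _ => ⟨fun x v hv => hv, fun x v w _ _ => by simp [ev, Lip]⟩
  | fd b =>
    intro hb
    exact ⟨fun x v _ => hB b hb x, fun x v w _ _ => by simp [ev, Lip]⟩
  | add e₁ e₂ ih₁ ih₂ =>
    intro hord
    simp only [ord, max_le_iff] at hord
    obtain ⟨h₁b, h₁l⟩ := ih₁ hord.1
    obtain ⟨h₂b, h₂l⟩ := ih₂ hord.2
    constructor
    · intro x v hv
      calc |ev f e₁ x v + ev f e₂ x v| ≤ |ev f e₁ x v| + |ev f e₂ x v| := abs_add_le _ _
        _ ≤ _ := add_le_add (h₁b x v hv) (h₂b x v hv)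
    · intro x v w hv hw
      have : ev f (e₁.add e₂) x v - ev f (e₁.add e₂) x w
          = (ev f e₁ x v - ev f e₁ x w) + (ev f e₂ x v - ev f e₂ x w) := by
        simp [ev]; ring
      rw [this, Lip, add_mul]
      exact (abs_add_le _ _).trans (add_le_add (h₁l x v w hv hw) (h₂l x v w hv hw))
  | mul e₁ e₂ ih₁ ih₂ =>
    intro hord
    simp only [ord, max_le_iff] at hord
    obtain ⟨h₁b, h₁l⟩ := ih₁ hord.1
    obtain ⟨h₂b, h₂l⟩ := ih₂ hord.2
    constructor
    · intro x v hv
      rw [show ev f (e₁.mul e₂) x v = ev f e₁ x v * ev f e₂ x v from rfl, Bnd, abs_mul]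
      exact mul_le_mul (h₁b x v hv) (h₂b x v hv) (abs_nonneg _)
        ((abs_nonneg _).trans (h₁b x v hv))
    · intro x v w hv hw
      have key : ev f (e₁.mul e₂) x v - ev f (e₁.mul e₂) x w
          = ev f e₁ x v * (ev f e₂ x v - ev f e₂ x w)
            + ev f e₂ x w * (ev f e₁ x v - ev f e₁ x w) := by
        simp [ev]; ring
      rw [key, Lip, add_mul]
      refine (abs_add_le _ _).trans (add_le_add ?_ ?_)
      · rw [abs_mul, mul_assoc]
        exact mul_le_mul (h₁b x v hv) (h₂l x v w hv hw) (abs_nonneg _)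
          ((abs_nonneg _).trans (h₁b x v hv))
      · rw [abs_mul, mul_assoc]
        exact mul_le_mul (h₂b x w hw) (h₁l x v w hv hw) (abs_nonneg _)
          ((abs_nonneg _).trans (h₂b x w hw))


open Polynomial

/-- the reference bump polynomial `(x (x-1))^(n-1)` -/
noncomputable def ψ₁ (n : ℕ) : Polynomial ℝ := (X * (X - C 1)) ^ (n - 1)

lemma psi1_monic (n : ℕ) : (ψ₁ n).Monic := (monic_X.mul (monic_X_sub_C 1)).pow _

lemma psi1_natDegree (n : ℕ) : (ψ₁ n).natDegree = (n - 1) * 2 := by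
  rw [ψ₁, natDegree_pow, natDegree_mul X_ne_zero (X_sub_C_ne_zero 1), natDegree_X,
    natDegree_X_sub_C]

lemma psi1_eval_deriv_zero (n k : ℕ) (hn : 2 ≤ n) (hk : k ≤ n - 2) :
    (Polynomial.derivative^[k] (ψ₁ n)).eval 0 = 0 := by
  have hdvd : (X - C (0:ℝ)) ^ (n - 1) ∣ ψ₁ n := by
    rw [ψ₁, mul_pow]; simp
  have hmult : n - 1 ≤ (ψ₁ n).rootMultiplicity 0 :=
    (le_rootMultiplicity_iff (psi1_monic n).ne_zero).2 hdvd
  exact isRoot_iterate_derivative_of_lt_rootMultiplicity (lt_of_lt_of_le (by omega) hmult)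

lemma psi1_eval_deriv_one (n k : ℕ) (hn : 2 ≤ n) (hk : k ≤ n - 2) :
    (Polynomial.derivative^[k] (ψ₁ n)).eval 1 = 0 := by
  have hdvd : (X - C (1:ℝ)) ^ (n - 1) ∣ ψ₁ n := by
    rw [ψ₁, mul_pow]; exact dvd_mul_left _ _
  have hmult : n - 1 ≤ (ψ₁ n).rootMultiplicity 1 :=
    (le_rootMultiplicity_iff (psi1_monic n).ne_zero).2 hdvd
  exact isRoot_iterate_derivative_of_lt_rootMultiplicity (lt_of_lt_of_le (by omega) hmult)

lemma psi1_top_deriv (n : ℕ) (hn : 2 ≤ n) :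
    Polynomial.derivative^[(n-1)*2] (ψ₁ n) = C ((Nat.factorial ((n-1)*2) : ℕ) : ℝ) := by
  have hdeg : (Polynomial.derivative^[(n-1)*2] (ψ₁ n)).natDegree ≤ 0 := by
    refine (natDegree_iterate_derivative _ _).trans ?_
    rw [psi1_natDegree]; omega
  rw [eq_C_of_natDegree_le_zero hdeg, coeff_iterate_derivative]
  simp only [zero_add, Nat.descFactorial_self]
  have : (ψ₁ n).coeff ((n-1)*2) = 1 := by
    have := (psi1_monic n).leadingCoeff
    rwa [leadingCoeff, psi1_natDegree] at this
  rw [this]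
  simp [smul_eq_mul]

lemma psi1_eval_bound (n : ℕ) {s : ℝ} (h0 : 0 ≤ s) (h1 : s ≤ 1) :
    |(ψ₁ n).eval s| ≤ 1 := by
  have : (ψ₁ n).eval s = (s * (s - 1)) ^ (n - 1) := by simp [ψ₁]
  rw [this, abs_pow]
  refine pow_le_one₀ (abs_nonneg _) ?_
  rw [abs_mul]
  calc |s| * |s - 1| ≤ 1 * 1 := by
        refine mul_le_mul ?_ ?_ (abs_nonneg _) zero_le_one <;> rw [abs_le] <;>
          constructor <;> linarith
    _ = 1 := by ring

/-- the scaled bump polynomial on `[0, h]` -/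
noncomputable def Ψp (n : ℕ) (h : ℝ) : Polynomial ℝ :=
  C (h ^ ((n-1)*2)) * (ψ₁ n).comp (C h⁻¹ * X)

lemma Psp_deriv (n : ℕ) (h : ℝ) (k : ℕ) :
    Polynomial.derivative^[k] (Ψp n h) =
      C (h ^ ((n-1)*2) * (h⁻¹) ^ k) *
        (Polynomial.derivative^[k] (ψ₁ n)).comp (C h⁻¹ * X) := by
  induction k with
  | zero => simp [Ψp]
  | succ k ih =>
    rw [Function.iterate_succ_apply', ih, derivative_C_mul, derivative_comp]
    have : Polynomial.derivative (C h⁻¹ * X) = C h⁻¹ := by simp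
    rw [this, Function.iterate_succ_apply']
    rw [show C (h ^ ((n-1)*2) * h⁻¹ ^ (k+1)) = C (h ^ ((n-1)*2) * h⁻¹ ^ k) * C h⁻¹ by
      rw [← C_mul]; ring_nf]
    ring

lemma Psp_natDegree (n : ℕ) (h : ℝ) : (Ψp n h).natDegree ≤ (n - 1) * 2 := by
  refine (natDegree_mul_le).trans ?_
  rw [natDegree_C, zero_add]
  refine (natDegree_comp_le).trans ?_
  calc (ψ₁ n).natDegree * (C h⁻¹ * X).natDegree ≤ (ψ₁ n).natDegree * 1 := by
        refine Nat.mul_le_mul_left _ ?_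
        refine (natDegree_mul_le).trans ?_
        simp
    _ ≤ (n - 1) * 2 := by rw [psi1_natDegree]; omega

lemma Psp_eval (n : ℕ) (h t : ℝ) :
    (Ψp n h).eval t = h ^ ((n-1)*2) * (ψ₁ n).eval (h⁻¹ * t) := by
  simp [Ψp, eval_comp]

lemma Psp_deriv_eval (n : ℕ) (h : ℝ) (k : ℕ) (t : ℝ) :
    (Polynomial.derivative^[k] (Ψp n h)).eval t
      = h ^ ((n-1)*2) * h⁻¹ ^ k * (Polynomial.derivative^[k] (ψ₁ n)).eval (h⁻¹ * t) := by
  rw [Psp_deriv]; simp [eval_comp]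

end VDB

/-- **Bootstrap step for the endpoint velocity error of prolongation-collocation polynomials.**
Let `n ≥ 2` and let `M₀`, `M`, `R`, `K` be bounds as below.  There is a constant `C > 0`,
depending only on `n`, `M₀`, `M`, `R`, `K`, such that for every `0 < h ≤ 1`, every `p ≥ 1`,
every `f` of class `C^{n-2}` with derivatives of orders `0, …, n-2` bounded by `M₀`, every
`2n`-times continuously differentiable solution `q` of `q̈ = f(q)` on `[0, h]` with
`|q^{(2n)}| ≤ M`, and every polynomial `q_d` of degree at most `2n - 1` with `q_d(0) = q(0)`,
`q_d(h) = q(h)` satisfying the prolongation-collocation conditions at `τ ∈ {0, h}`, such that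
`|q̇(τ)| ≤ R`, `|q̇_d(τ)| ≤ R` and `|q̇_d(τ) - q̇(τ)| ≤ K h^p` at both endpoints, one has
`|(q̇_d(h) - q̇(h)) - (q̇_d(0) - q̇(0))| ≤ C h^{min(p+2, 2n-1)}`. -/
theorem velocity_defect_bootstrap
    (n : ℕ) (hn : 2 ≤ n) (M₀ M R K : ℝ) (hR : 0 < R) (hK : 0 < K) :
    ∃ C > 0,
      ∀ h : ℝ, 0 < h → h ≤ 1 →
      ∀ p : ℝ, 1 ≤ p →
      ∀ f : ℝ → ℝ, ContDiff ℝ ((n - 2 : ℕ) : ℕ∞) f →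
        (∀ i ≤ n - 2, ∀ x : ℝ, |iteratedDeriv i f x| ≤ M₀) →
      ∀ q : ℝ → ℝ, ContDiffOn ℝ ((2 * n : ℕ) : ℕ∞) q (Set.Icc 0 h) →
        (∀ t ∈ Set.Icc (0 : ℝ) h, iteratedDerivWithin 2 q (Set.Icc 0 h) t = f (q t)) →
        (∀ t ∈ Set.Icc (0 : ℝ) h, |iteratedDerivWithin (2 * n) q (Set.Icc 0 h) t| ≤ M) →
      ∀ qd : Polynomial ℝ, qd.natDegree ≤ 2 * n - 1 →
        qd.eval 0 = q 0 → qd.eval h = q h →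
        (∀ j : ℕ, 2 ≤ j → j ≤ n → ∀ τ ∈ ({0, h} : Set ℝ),
          (Polynomial.derivative^[j] qd).eval τ =
            prolong f (j - 2) (qd.eval τ) ((Polynomial.derivative qd).eval τ)) →
        (∀ τ ∈ ({0, h} : Set ℝ), |iteratedDerivWithin 1 q (Set.Icc 0 h) τ| ≤ R) →
        (∀ τ ∈ ({0, h} : Set ℝ), |(Polynomial.derivative qd).eval τ| ≤ R) →
        (∀ τ ∈ ({0, h} : Set ℝ),
          |(Polynomial.derivative qd).eval τ - iteratedDerivWithin 1 q (Set.Icc 0 h) τ| ≤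
            K * h ^ p) →
        |((Polynomial.derivative qd).eval h - iteratedDerivWithin 1 q (Set.Icc 0 h) h) -
            ((Polynomial.derivative qd).eval 0 - iteratedDerivWithin 1 q (Set.Icc 0 h) 0)| ≤
          C * h ^ (min (p + 2) (2 * n - 1 : ℝ)) := by
  classical
  set LL : ℝ := ∑ k ∈ Finset.range (n - 1), VDB.Lip (max M₀ 0) R (VDB.P k) with hLLdef
  have hLL0 : 0 ≤ LL :=
    Finset.sum_nonneg fun k _ => VDB.Lip_nonneg (le_max_right _ _) hR.le _
  set Cψ : ℝ := ∑ k ∈ Finset.range (2 * n),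
      (|(Polynomial.derivative^[k] (VDB.ψ₁ n)).eval 0| +
        |(Polynomial.derivative^[k] (VDB.ψ₁ n)).eval 1|) with hCψdef
  have hCψ0 : 0 ≤ Cψ :=
    Finset.sum_nonneg fun k _ => add_nonneg (abs_nonneg _) (abs_nonneg _)
  set c₂ : ℝ := (Nat.factorial ((n - 1) * 2) : ℝ) with hc₂def
  have hc₂ : 0 < c₂ := by
    rw [hc₂def]; exact_mod_cast Nat.factorial_pos _
  have hT0 : 0 ≤ 2 * LL * K * Cψ :=
    mul_nonneg (mul_nonneg (mul_nonneg (by norm_num) hLL0) hK.le) hCψ0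
  refine ⟨(max M 0 + (2 * n) * (2 * LL * K * Cψ)) * c₂⁻¹ + 1, ?_, ?_⟩
  · have h1 : 0 ≤ max M 0 + (2 * n) * (2 * LL * K * Cψ) :=
      add_nonneg (le_max_right _ _) (mul_nonneg (by positivity) hT0)
    nlinarith [mul_nonneg h1 (inv_nonneg.2 hc₂.le)]
  intro h hh0 hh1 p hp f hf hM₀ q hq hq2 hq2n qd hdeg hqd0 hqdh hcol hQR hqdR hKhp
  set s : Set ℝ := Set.Icc (0 : ℝ) h with hsdef
  have hs : UniqueDiffOn ℝ s := uniqueDiffOn_Icc hh0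
  have h0s : (0 : ℝ) ∈ s := ⟨le_refl 0, hh0.le⟩
  have hhs : h ∈ s := ⟨hh0.le, le_refl h⟩
  have hmem : ∀ τ ∈ ({0, h} : Set ℝ), τ ∈ s := by
    intro τ hτ
    rcases hτ with rfl | hτ
    · exact h0s
    · rw [Set.mem_singleton_iff] at hτ; rw [hτ]; exact hhs
  have hτq : ∀ τ ∈ ({0, h} : Set ℝ), qd.eval τ = q τ := by
    intro τ hτ
    rcases hτ with rfl | hτ
    · exact hqd0
    · rw [Set.mem_singleton_iff] at hτ; rw [hτ]; exact hqdh
  have hM₀' : ∀ i ≤ n - 2, ∀ x : ℝ, |iteratedDeriv i f x| ≤ max M₀ 0 :=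
    fun i hi x => (hM₀ i hi x).trans (le_max_left _ _)
  have hQd : ∀ jj, jj < 2 * n → ∀ t ∈ s,
      HasDerivWithinAt (iteratedDerivWithin jj q s)
        (iteratedDerivWithin (jj + 1) q s t) s t := by
    intro jj hjj t ht
    have hdiff := hq.differentiableOn_iteratedDerivWithin (m := jj)
      (by exact_mod_cast hjj) hs
    have h2 := (hdiff t ht).hasDerivWithinAt
    rwa [← iteratedDerivWithin_succ] at h2
  have hq1 : ∀ t ∈ s, HasDerivWithinAt q (iteratedDerivWithin 1 q s t) s t := by
    intro t ht
    have h2 := hQd 0 (by omega) t ht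
    simpa using h2
  -- the prolongation chain for q
  have hqp : ∀ j, 2 ≤ j → j ≤ n → ∀ t ∈ s,
      iteratedDerivWithin j q s t
        = VDB.ev f (VDB.P (j - 2)) (q t) (iteratedDerivWithin 1 q s t) := by
    intro j hj2
    induction j, hj2 using Nat.le_induction with
    | base =>
      intro _ t ht
      rw [hq2 t ht]
      simp [VDB.P, VDB.ev]
    | succ j hj ih =>
      intro hjn t ht
      have hord : VDB.ord (VDB.P (j - 2)) < n - 2 :=
        lt_of_le_of_lt (VDB.ord_P _) (by omega)
      have hF := VDB.ev_hasFDerivAt hf (VDB.P (j - 2)) hord (q t)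
        (iteratedDerivWithin 1 q s t)
      have hc : HasDerivWithinAt (fun u => (q u, iteratedDerivWithin 1 q s u))
          (iteratedDerivWithin 1 q s t, iteratedDerivWithin 2 q s t) s t :=
        (hq1 t ht).prodMk (hQd 1 (by omega) t ht)
      have hcomp' : HasDerivWithinAt
          (fun u => VDB.ev f (VDB.P (j - 2)) (q u) (iteratedDerivWithin 1 q s u))
          (VDB.ev f (VDB.dX (VDB.P (j - 2))) (q t) (iteratedDerivWithin 1 q s t)
              * iteratedDerivWithin 1 q s t
            + VDB.ev f (VDB.dV (VDB.P (j - 2))) (q t) (iteratedDerivWithin 1 q s t)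
              * iteratedDerivWithin 2 q s t) s t := by
        have h3 := hF.comp_hasDerivWithinAt t hc
        simp only [ContinuousLinearMap.add_apply, ContinuousLinearMap.smul_apply,
          ContinuousLinearMap.coe_fst', ContinuousLinearMap.coe_snd', smul_eq_mul] at h3
        exact h3
      rw [iteratedDerivWithin_succ,
        derivWithin_congr (fun y hy => ih (by omega) y hy) (ih (by omega) t ht),
        hcomp'.derivWithin (hs t ht),
        show j + 1 - 2 = (j - 2) + 1 from by omega, hq2 t ht]
      simp only [VDB.P, VDB.ev, iteratedDeriv_zero]
      ring
  set E : ℕ → ℝ → ℝ :=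
    fun j t => (Polynomial.derivative^[j] qd).eval t - iteratedDerivWithin j q s t
    with hEdef
  set ψp : ℕ → ℝ → ℝ := fun k t => (Polynomial.derivative^[k] (VDB.Ψp n h)).eval t
    with hψdef
  set Φ : ℝ → ℝ := fun t => ∑ k ∈ Finset.range (2 * n),
      (-1 : ℝ) ^ k * (E (2 * n - 1 - k) t * ψp k t) with hΦdef
  -- ψ endpoint values
  have hψval : ∀ k, ψp k 0
        = h ^ ((n - 1) * 2) * h⁻¹ ^ k * (Polynomial.derivative^[k] (VDB.ψ₁ n)).eval 0
      ∧ ψp k h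
        = h ^ ((n - 1) * 2) * h⁻¹ ^ k * (Polynomial.derivative^[k] (VDB.ψ₁ n)).eval 1 := by
    intro k
    constructor
    · simp only [hψdef]; rw [VDB.Psp_deriv_eval]; rw [mul_zero]
    · simp only [hψdef]; rw [VDB.Psp_deriv_eval, inv_mul_cancel₀ hh0.ne']
  have hψzero : ∀ k ≤ n - 2, ψp k 0 = 0 ∧ ψp k h = 0 := by
    intro k hk
    refine ⟨?_, ?_⟩
    · rw [(hψval k).1, VDB.psi1_eval_deriv_zero n k hn hk, mul_zero]
    · rw [(hψval k).2, VDB.psi1_eval_deriv_one n k hn hk, mul_zero]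
  have hhA1 : h ^ ((n - 1) * 2) * h⁻¹ ^ ((n - 1) * 2) = 1 := by
    rw [← mul_pow, mul_inv_cancel₀ hh0.ne', one_pow]
  have hψc2 : ψp ((n - 1) * 2) 0 = c₂ ∧ ψp ((n - 1) * 2) h = c₂ := by
    constructor
    · rw [(hψval _).1, VDB.psi1_top_deriv n hn, Polynomial.eval_C, hhA1, one_mul, hc₂def]
    · rw [(hψval _).2, VDB.psi1_top_deriv n hn, Polynomial.eval_C, hhA1, one_mul, hc₂def]
  have hψbnd : ∀ k, k < 2 * n →
      |ψp k 0| ≤ h ^ ((n - 1) * 2) * h⁻¹ ^ k * Cψ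
      ∧ |ψp k h| ≤ h ^ ((n - 1) * 2) * h⁻¹ ^ k * Cψ := by
    intro k hk
    have hterm : |(Polynomial.derivative^[k] (VDB.ψ₁ n)).eval 0|
        + |(Polynomial.derivative^[k] (VDB.ψ₁ n)).eval 1| ≤ Cψ := by
      rw [hCψdef]
      exact Finset.single_le_sum
        (f := fun i => |(Polynomial.derivative^[i] (VDB.ψ₁ n)).eval 0|
          + |(Polynomial.derivative^[i] (VDB.ψ₁ n)).eval 1|)
        (fun i _ => add_nonneg (abs_nonneg _) (abs_nonneg _)) (Finset.mem_range.2 hk)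
    have hpos : (0:ℝ) ≤ h ^ ((n - 1) * 2) * h⁻¹ ^ k := by positivity
    constructor
    · rw [(hψval k).1, abs_mul, abs_of_nonneg hpos]
      exact mul_le_mul_of_nonneg_left
        (le_trans (le_add_of_nonneg_right (abs_nonneg _)) hterm) hpos
    · rw [(hψval k).2, abs_mul, abs_of_nonneg hpos]
      exact mul_le_mul_of_nonneg_left
        (le_trans (le_add_of_nonneg_left (abs_nonneg _)) hterm) hpos
  -- E endpoint facts
  have hE0 : ∀ τ ∈ ({0, h} : Set ℝ), E 0 τ = 0 := by
    intro τ hτ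
    simp only [hEdef, Function.iterate_zero, id_eq, iteratedDerivWithin_zero]
    rw [hτq τ hτ, sub_self]
  have hE2 : ∀ τ ∈ ({0, h} : Set ℝ), E 2 τ = 0 := by
    intro τ hτ
    have h1 := hcol 2 le_rfl hn τ hτ
    simp only [hEdef]
    rw [h1, hq2 τ (hmem τ hτ), hτq τ hτ]
    show f (q τ) - f (q τ) = 0
    rw [sub_self]
  have hEj : ∀ j, 3 ≤ j → j ≤ n → ∀ τ ∈ ({0, h} : Set ℝ),
      |E j τ| ≤ LL * (K * h ^ p) := by
    intro j h3 hjn τ hτ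
    have hτs := hmem τ hτ
    have hEexp : E j τ
        = VDB.ev f (VDB.P (j - 2)) (q τ) ((Polynomial.derivative qd).eval τ)
          - VDB.ev f (VDB.P (j - 2)) (q τ) (iteratedDerivWithin 1 q s τ) := by
      simp only [hEdef]
      rw [hcol j (by omega) hjn τ hτ,
        VDB.prolong_eq hf (j - 2) (by omega) (qd.eval τ) ((Polynomial.derivative qd).eval τ),
        hqp j (by omega) hjn τ hτs, hτq τ hτ]
    rw [hEexp]
    have hlip := (VDB.ev_est (m := n - 2) (R := R) hM₀' (VDB.P (j - 2))
      ((VDB.ord_P _).trans (by omega))).2 (q τ) _ _ (hqdR τ hτ) (hQR τ hτ)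
    refine hlip.trans ?_
    have h1 : VDB.Lip (max M₀ 0) R (VDB.P (j - 2)) ≤ LL := by
      rw [hLLdef]
      exact Finset.single_le_sum
        (fun k _ => VDB.Lip_nonneg (le_max_right _ _) hR.le _)
        (Finset.mem_range.2 (by omega))
    exact mul_le_mul h1 (hKhp τ hτ) (abs_nonneg _) hLL0
  -- derivative of Φ
  have hterm : ∀ t ∈ s, ∀ k, k < 2 * n →
      HasDerivWithinAt (fun u => (-1 : ℝ) ^ k * (E (2 * n - 1 - k) u * ψp k u))
        ((-1 : ℝ) ^ k * (E (2 * n - k) t * ψp k t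
          + E (2 * n - 1 - k) t * ψp (k + 1) t)) s t := by
    intro t ht k hk
    have hE' : HasDerivWithinAt (fun u => E (2 * n - 1 - k) u) (E (2 * n - k) t) s t := by
      have h1 : HasDerivAt (fun u => (Polynomial.derivative^[2 * n - 1 - k] qd).eval u)
          ((Polynomial.derivative^[2 * n - k] qd).eval t) t := by
        have h2 := Polynomial.hasDerivAt (Polynomial.derivative^[2 * n - 1 - k] qd) t
        rw [show 2 * n - k = (2 * n - 1 - k) + 1 from by omega, Function.iterate_succ_apply']
        exact h2
      have h3 := hQd (2 * n - 1 - k) (by omega) t ht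
      have h4 := h1.hasDerivWithinAt.sub h3
      rw [show 2 * n - 1 - k + 1 = 2 * n - k from by omega] at h4
      exact h4
    have hψ' : HasDerivWithinAt (fun u => ψp k u) (ψp (k + 1) t) s t := by
      have h1 := (Polynomial.hasDerivAt
        (Polynomial.derivative^[k] (VDB.Ψp n h)) t).hasDerivWithinAt (s := s)
      simp only [hψdef]
      rw [Function.iterate_succ_apply']
      exact h1
    exact (hE'.mul hψ').const_mul _
  have hΦd : ∀ t ∈ s, HasDerivWithinAt Φ
      (-(iteratedDerivWithin (2 * n) q s t) * (VDB.Ψp n h).eval t) s t := by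
    intro t ht
    have hsum : HasDerivWithinAt
        (fun u => ∑ k ∈ Finset.range (2 * n),
          (-1 : ℝ) ^ k * (E (2 * n - 1 - k) u * ψp k u))
        (∑ k ∈ Finset.range (2 * n), (-1 : ℝ) ^ k * (E (2 * n - k) t * ψp k t
          + E (2 * n - 1 - k) t * ψp (k + 1) t)) s t :=
      HasDerivWithinAt.fun_sum fun k hk => hterm t ht k (Finset.mem_range.1 hk)
    have htel : (∑ k ∈ Finset.range (2 * n), (-1 : ℝ) ^ k * (E (2 * n - k) t * ψp k t
          + E (2 * n - 1 - k) t * ψp (k + 1) t))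
        = -(iteratedDerivWithin (2 * n) q s t) * (VDB.Ψp n h).eval t := by
      have hstep : ∀ k ∈ Finset.range (2 * n),
          (-1 : ℝ) ^ k * (E (2 * n - k) t * ψp k t + E (2 * n - 1 - k) t * ψp (k + 1) t)
            = ((fun i => (-1 : ℝ) ^ i * (E (2 * n - i) t * ψp i t)) k
              - (fun i => (-1 : ℝ) ^ i * (E (2 * n - i) t * ψp i t)) (k + 1)) := by
        intro k hk
        simp only
        rw [show 2 * n - (k + 1) = 2 * n - 1 - k from by omega, pow_succ]
        ring
      rw [Finset.sum_congr rfl hstep, Finset.sum_range_sub']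
      have hqd2n : (Polynomial.derivative^[2 * n] qd) = 0 :=
        Polynomial.iterate_derivative_eq_zero (lt_of_le_of_lt hdeg (by omega))
      have hΨ2n : (Polynomial.derivative^[2 * n] (VDB.Ψp n h)) = 0 :=
        Polynomial.iterate_derivative_eq_zero
          (lt_of_le_of_lt (VDB.Psp_natDegree n h) (by omega))
      simp only [hEdef, hψdef, pow_zero, one_mul, Nat.sub_zero, hqd2n, hΨ2n,
        Function.iterate_zero, id_eq, Polynomial.eval_zero]
      ring
    rw [hΦdef]
    exact htel ▸ hsum
  -- mean value bound
  have hbound : ∀ t ∈ s, ‖-(iteratedDerivWithin (2 * n) q s t) * (VDB.Ψp n h).eval t‖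
      ≤ max M 0 * h ^ ((n - 1) * 2) := by
    intro t ht
    rw [Real.norm_eq_abs, abs_mul, abs_neg]
    have h1 : |(VDB.Ψp n h).eval t| ≤ h ^ ((n - 1) * 2) := by
      rw [VDB.Psp_eval, abs_mul, abs_of_nonneg (pow_nonneg hh0.le _)]
      have h01 : 0 ≤ h⁻¹ * t := mul_nonneg (inv_nonneg.2 hh0.le) ht.1
      have h11 : h⁻¹ * t ≤ 1 := by
        rw [mul_comm, ← div_eq_mul_inv]
        exact (div_le_one hh0).2 ht.2
      calc h ^ ((n - 1) * 2) * |(VDB.ψ₁ n).eval (h⁻¹ * t)| ≤ h ^ ((n - 1) * 2) * 1 :=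
            mul_le_mul_of_nonneg_left (VDB.psi1_eval_bound n h01 h11) (pow_nonneg hh0.le _)
        _ = h ^ ((n - 1) * 2) := mul_one _
    exact mul_le_mul ((hq2n t ht).trans (le_max_left _ _)) h1 (abs_nonneg _)
      (le_max_right M 0)
  have hMVT : |Φ h - Φ 0| ≤ max M 0 * h ^ ((n - 1) * 2) * h := by
    have h2 := Convex.norm_image_sub_le_of_norm_hasDerivWithin_le
      (fun t ht => hΦd t ht) hbound (convex_Icc 0 h) h0s hhs
    simpa [Real.norm_eq_abs, abs_of_pos hh0] using h2
  -- extraction of the main term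
  have hgsplit : c₂ * (E 1 h - E 1 0)
      = (Φ h - Φ 0) - ∑ k ∈ (Finset.range (2 * n)).erase ((n - 1) * 2),
          ((-1 : ℝ) ^ k * (E (2 * n - 1 - k) h * ψp k h)
            - (-1 : ℝ) ^ k * (E (2 * n - 1 - k) 0 * ψp k 0)) := by
    have hΦdiff : Φ h - Φ 0 = ∑ k ∈ Finset.range (2 * n),
        ((-1 : ℝ) ^ k * (E (2 * n - 1 - k) h * ψp k h)
          - (-1 : ℝ) ^ k * (E (2 * n - 1 - k) 0 * ψp k 0)) := by
      rw [hΦdef, ← Finset.sum_sub_distrib]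
    have hmemk : (n - 1) * 2 ∈ Finset.range (2 * n) := Finset.mem_range.2 (by omega)
    rw [hΦdiff, ← Finset.add_sum_erase _ _ hmemk]
    have hidx : 2 * n - 1 - (n - 1) * 2 = 1 := by omega
    have hpow : (-1 : ℝ) ^ ((n - 1) * 2) = 1 :=
      Even.neg_one_pow ⟨n - 1, by omega⟩
    rw [hidx, hpow, hψc2.1, hψc2.2]
    ring
  -- bound the non-main terms
  have hT0' : (0:ℝ) ≤ 2 * LL * K * Cψ * (h ^ p * h ^ 2) :=
    mul_nonneg hT0 (mul_nonneg (Real.rpow_nonneg hh0.le p) (by positivity))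
  have hEsum : ∀ k ∈ (Finset.range (2 * n)).erase ((n - 1) * 2),
      |(-1 : ℝ) ^ k * (E (2 * n - 1 - k) h * ψp k h)
        - (-1 : ℝ) ^ k * (E (2 * n - 1 - k) 0 * ψp k 0)|
        ≤ 2 * LL * K * Cψ * (h ^ p * h ^ 2) := by
    intro k hk
    obtain ⟨hkne, hkr⟩ := Finset.mem_erase.1 hk
    have hklt : k < 2 * n := Finset.mem_range.1 hkr
    have habs : |(-1 : ℝ) ^ k * (E (2 * n - 1 - k) h * ψp k h)
        - (-1 : ℝ) ^ k * (E (2 * n - 1 - k) 0 * ψp k 0)|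
        ≤ |E (2 * n - 1 - k) h| * |ψp k h| + |E (2 * n - 1 - k) 0| * |ψp k 0| := by
      refine (abs_sub _ _).trans ?_
      simp [abs_mul, abs_pow]
    by_cases hc1 : k ≤ n - 2
    · refine le_trans habs ?_
      rw [(hψzero k hc1).1, (hψzero k hc1).2]
      simpa using hT0'
    · by_cases hcz : k = 2 * n - 1
      · refine le_trans habs ?_
        have hz : 2 * n - 1 - k = 0 := by omega
        rw [hz, hE0 h (by simp), hE0 0 (by simp)]
        simpa using hT0'
      · by_cases hc3 : k = 2 * n - 3
        · refine le_trans habs ?_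
          have hz : 2 * n - 1 - k = 2 := by omega
          rw [hz, hE2 h (by simp), hE2 0 (by simp)]
          simpa using hT0'
        · -- generic term
          have hj3 : 3 ≤ 2 * n - 1 - k := by omega
          have hjn : 2 * n - 1 - k ≤ n := by omega
          have hEh := hEj _ hj3 hjn h (by simp)
          have hE0' := hEj _ hj3 hjn 0 (by simp)
          have hexp : h ^ ((n - 1) * 2) * h⁻¹ ^ k = h ^ ((n - 1) * 2 - k) := by
            rw [pow_sub₀ h hh0.ne' (by omega : k ≤ (n - 1) * 2), ← inv_pow]
          have hh2 : h ^ ((n - 1) * 2 - k) ≤ h ^ 2 :=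
            pow_le_pow_of_le_one hh0.le hh1 (by omega)
          have hψh : |ψp k h| ≤ Cψ * h ^ 2 := by
            refine ((hψbnd k hklt).2).trans ?_
            rw [hexp, mul_comm]
            exact mul_le_mul_of_nonneg_left hh2 hCψ0
          have hψ0' : |ψp k 0| ≤ Cψ * h ^ 2 := by
            refine ((hψbnd k hklt).1).trans ?_
            rw [hexp, mul_comm]
            exact mul_le_mul_of_nonneg_left hh2 hCψ0
          have hEKn : (0:ℝ) ≤ LL * (K * h ^ p) :=
            mul_nonneg hLL0 (mul_nonneg hK.le (Real.rpow_nonneg hh0.le p))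
          refine le_trans habs ?_
          calc |E (2 * n - 1 - k) h| * |ψp k h| + |E (2 * n - 1 - k) 0| * |ψp k 0|
              ≤ (LL * (K * h ^ p)) * (Cψ * h ^ 2) + (LL * (K * h ^ p)) * (Cψ * h ^ 2) :=
                add_le_add
                  (mul_le_mul hEh hψh (abs_nonneg _) hEKn)
                  (mul_le_mul hE0' hψ0' (abs_nonneg _) hEKn)
            _ = 2 * LL * K * Cψ * (h ^ p * h ^ 2) := by ring
  have hsum_bound : |∑ k ∈ (Finset.range (2 * n)).erase ((n - 1) * 2),
      ((-1 : ℝ) ^ k * (E (2 * n - 1 - k) h * ψp k h)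
        - (-1 : ℝ) ^ k * (E (2 * n - 1 - k) 0 * ψp k 0))|
      ≤ (2 * n) * (2 * LL * K * Cψ * (h ^ p * h ^ 2)) := by
    refine (Finset.abs_sum_le_sum_abs _ _).trans ?_
    refine (Finset.sum_le_card_nsmul _ _ _ hEsum).trans ?_
    rw [nsmul_eq_mul]
    refine mul_le_mul_of_nonneg_right ?_ hT0'
    have hcard : ((Finset.range (2 * n)).erase ((n - 1) * 2)).card ≤ 2 * n :=
      (Finset.card_erase_le).trans (by rw [Finset.card_range])
    exact_mod_cast hcard
  have hmain : |c₂ * (E 1 h - E 1 0)|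
      ≤ max M 0 * h ^ ((n - 1) * 2) * h
        + (2 * n) * (2 * LL * K * Cψ * (h ^ p * h ^ 2)) := by
    rw [hgsplit]
    exact (abs_sub _ _).trans (add_le_add hMVT hsum_bound)
  -- exponent conversions
  have hmin1 : h ^ ((n - 1) * 2) * h ≤ h ^ (min (p + 2) (2 * (n:ℝ) - 1)) := by
    have h1 : h ^ ((n - 1) * 2) * h = h ^ ((n - 1) * 2 + 1) := (pow_succ h _).symm
    rw [h1, ← Real.rpow_natCast h ((n - 1) * 2 + 1)]
    refine Real.rpow_le_rpow_of_exponent_ge hh0 hh1 ?_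
    have hcast : (((n - 1) * 2 + 1 : ℕ) : ℝ) = 2 * (n:ℝ) - 1 := by
      rw [Nat.cast_add, Nat.cast_mul, Nat.cast_sub (by omega : 1 ≤ n)]
      push_cast
      ring
    rw [hcast]
    exact min_le_right _ _
  have hmin2 : h ^ p * h ^ 2 ≤ h ^ (min (p + 2) (2 * (n:ℝ) - 1)) := by
    have h1 : h ^ p * (h:ℝ) ^ (2:ℕ) = h ^ (p + 2 : ℝ) := by
      rw [Real.rpow_add hh0]
      congr 1
      rw [← Real.rpow_natCast h 2]
      norm_num
    rw [h1]
    exact Real.rpow_le_rpow_of_exponent_ge hh0 hh1 (min_le_left _ _)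
  have hrmin0 : (0:ℝ) ≤ h ^ (min (p + 2) (2 * (n:ℝ) - 1)) := Real.rpow_nonneg hh0.le _
  -- final assembly
  have hfin : |E 1 h - E 1 0|
      ≤ ((max M 0 + (2 * n) * (2 * LL * K * Cψ)) * c₂⁻¹ + 1)
        * h ^ (min (p + 2) (2 * (n:ℝ) - 1)) := by
    have heq : |E 1 h - E 1 0| = |c₂ * (E 1 h - E 1 0)| * c₂⁻¹ := by
      rw [abs_mul, abs_of_pos hc₂]
      field_simp
    rw [heq]
    calc |c₂ * (E 1 h - E 1 0)| * c₂⁻¹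
        ≤ (max M 0 * h ^ ((n - 1) * 2) * h
            + (2 * n) * (2 * LL * K * Cψ * (h ^ p * h ^ 2))) * c₂⁻¹ :=
          mul_le_mul_of_nonneg_right hmain (inv_nonneg.2 hc₂.le)
      _ ≤ ((max M 0 + (2 * n) * (2 * LL * K * Cψ))
            * h ^ (min (p + 2) (2 * (n:ℝ) - 1))) * c₂⁻¹ := by
          refine mul_le_mul_of_nonneg_right ?_ (inv_nonneg.2 hc₂.le)
          have e1 : max M 0 * h ^ ((n - 1) * 2) * h
              ≤ max M 0 * h ^ (min (p + 2) (2 * (n:ℝ) - 1)) := by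
            rw [mul_assoc]
            exact mul_le_mul_of_nonneg_left hmin1 (le_max_right M 0)
          have e2 : (2 * n : ℝ) * (2 * LL * K * Cψ * (h ^ p * h ^ 2))
              ≤ (2 * n : ℝ) * (2 * LL * K * Cψ * h ^ (min (p + 2) (2 * (n:ℝ) - 1))) := by
            refine mul_le_mul_of_nonneg_left ?_ (by positivity)
            exact mul_le_mul_of_nonneg_left hmin2 hT0
          calc max M 0 * h ^ ((n - 1) * 2) * h
                + (2 * n) * (2 * LL * K * Cψ * (h ^ p * h ^ 2))
              ≤ max M 0 * h ^ (min (p + 2) (2 * (n:ℝ) - 1))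
                + (2 * n) * (2 * LL * K * Cψ * h ^ (min (p + 2) (2 * (n:ℝ) - 1))) :=
                add_le_add e1 e2
            _ = (max M 0 + (2 * n) * (2 * LL * K * Cψ))
                * h ^ (min (p + 2) (2 * (n:ℝ) - 1)) := by ring
      _ = ((max M 0 + (2 * n) * (2 * LL * K * Cψ)) * c₂⁻¹)
            * h ^ (min (p + 2) (2 * (n:ℝ) - 1)) := by ring
      _ ≤ ((max M 0 + (2 * n) * (2 * LL * K * Cψ)) * c₂⁻¹ + 1)
            * h ^ (min (p + 2) (2 * (n:ℝ) - 1)) := by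
          refine mul_le_mul_of_nonneg_right ?_ hrmin0
          linarith
  have hgoal : (⇑Polynomial.derivative)^[1] qd = Polynomial.derivative qd :=
    congrFun (Function.iterate_one _) qd
  rw [← hgoal]
  exact hfin
end

section
/- Let k ≥ 1 be an integer, let G : ℝ × ℝ → ℝ be of class C^k with all partial derivatives of order at most k bounded in absolute value by M, and let R > 0. Let u, w : I → ℝ be k-times continuously differentiable functions on an open interval I, let τ ∈ I, and suppose |u^{(r)}(τ)| ≤ R and |w^{(r)}(τ)| ≤ R for all r = 0, …, k. Then there exists a constant C > 0 depending only on k, M, and R such that | (d/dt)^{k−1} [ G(u(t), u̇(t)) ] |_{t=τ} − (d/dt)^{k−1} [ G(w(t), ẇ(t)) ] |_{t=τ} | ≤ C · max_{0 ≤ r ≤ k} |u^{(r)}(τ) − w^{(r)}(τ)|. -/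
open OrderedFinpartition Set

lemma myProdSub {𝕜 : Type*} [NontriviallyNormedField 𝕜] {ι : Type*} [Fintype ι]
    {E : ι → Type*} [∀ i, NormedAddCommGroup (E i)] [∀ i, NormedSpace 𝕜 (E i)]
    {F G : Type*} [NormedAddCommGroup F] [NormedSpace 𝕜 F] [NormedAddCommGroup G]
    [NormedSpace 𝕜 G]
    (f f' : ContinuousMultilinearMap 𝕜 E F) (g g' : ContinuousMultilinearMap 𝕜 E G) :
    f.prod g - f'.prod g' = (f - f').prod (g - g') := by
  ext v <;> simp

lemma myNormFDerivSub (f g : ℝ → ℝ) (j : ℕ) (x : ℝ) :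
    ‖iteratedFDeriv ℝ j f x - iteratedFDeriv ℝ j g x‖
      = |iteratedDeriv j f x - iteratedDeriv j g x| := by
  have h1 : iteratedFDeriv ℝ j f x
      = ContinuousMultilinearMap.piFieldEquiv ℝ (Fin j) ℝ (iteratedDeriv j f x) := by
    rw [iteratedFDeriv_eq_equiv_comp]; rfl
  have h2 : iteratedFDeriv ℝ j g x
      = ContinuousMultilinearMap.piFieldEquiv ℝ (Fin j) ℝ (iteratedDeriv j g x) := by
    rw [iteratedFDeriv_eq_equiv_comp]; rfl
  rw [h1, h2, ← map_sub, LinearIsometryEquiv.norm_map, Real.norm_eq_abs]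

lemma myCompNorm {n : ℕ} (c : OrderedFinpartition n)
    (f : ContinuousMultilinearMap ℝ (fun _ : Fin c.length => ℝ × ℝ) ℝ)
    (p : ∀ i : Fin c.length, ContinuousMultilinearMap ℝ (fun _ : Fin (c.partSize i) => ℝ) (ℝ × ℝ)) :
    ‖c.compAlongOrderedFinpartition f p‖ ≤ ‖f‖ * ∏ i, ‖p i‖ := by
  apply ContinuousMultilinearMap.opNorm_le_bound (by positivity) (fun v => ?_)
  simp only [compAlongOrderFinpartition_apply]
  apply (f.le_opNorm _).trans
  rw [mul_assoc, ← c.prod_sigma_eq_prod, ← Finset.prod_mul_distrib]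
  gcongr with m _
  exact (p m).le_opNorm _

lemma myCompSub {n : ℕ} (c : OrderedFinpartition n)
    (f₁ f₂ : ContinuousMultilinearMap ℝ (fun _ : Fin c.length => ℝ × ℝ) ℝ)
    (p : ∀ i : Fin c.length, ContinuousMultilinearMap ℝ (fun _ : Fin (c.partSize i) => ℝ) (ℝ × ℝ)) :
    c.compAlongOrderedFinpartition f₁ p - c.compAlongOrderedFinpartition f₂ p
      = c.compAlongOrderedFinpartition (f₁ - f₂) p := by
  ext v
  simp [compAlongOrderFinpartition_apply]

lemma myCompDiff {n : ℕ} (c : OrderedFinpartition n) (Mf R' ε δ : ℝ)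
    (hMf : 0 ≤ Mf) (hR' : 1 ≤ R') (hε : 0 ≤ ε) (hδ : 0 ≤ δ)
    (f₁ f₂ : ContinuousMultilinearMap ℝ (fun _ : Fin c.length => ℝ × ℝ) ℝ)
    (p₁ p₂ : ∀ i : Fin c.length,
      ContinuousMultilinearMap ℝ (fun _ : Fin (c.partSize i) => ℝ) (ℝ × ℝ))
    (hf₂ : ‖f₂‖ ≤ Mf) (hfd : ‖f₁ - f₂‖ ≤ ε)
    (h₁ : ∀ i, ‖p₁ i‖ ≤ R') (h₂ : ∀ i, ‖p₂ i‖ ≤ R') (hpd : ∀ i, ‖p₁ i - p₂ i‖ ≤ δ) :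
    ‖c.compAlongOrderedFinpartition f₁ p₁ - c.compAlongOrderedFinpartition f₂ p₂‖ ≤
      ε * R' ^ n + Mf * n * R' ^ n * δ := by
  have hR0 : (0:ℝ) ≤ R' := zero_le_one.trans hR'
  have hLn : c.length ≤ n := c.length_le
  have hprod : ∏ i, ‖p₁ i‖ ≤ R' ^ n := by
    calc ∏ i, ‖p₁ i‖ ≤ ∏ _i : Fin c.length, R' := by
          apply Finset.prod_le_prod (fun i _ => norm_nonneg _) (fun i _ => h₁ i)
      _ = R' ^ c.length := by simp
      _ ≤ R' ^ n := pow_le_pow_right₀ hR' hLn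
  have tri : ‖c.compAlongOrderedFinpartition f₁ p₁ - c.compAlongOrderedFinpartition f₂ p₂‖ ≤
      ‖c.compAlongOrderedFinpartition f₁ p₁ - c.compAlongOrderedFinpartition f₂ p₁‖ +
      ‖c.compAlongOrderedFinpartition f₂ p₁ - c.compAlongOrderedFinpartition f₂ p₂‖ :=
    norm_sub_le_norm_sub_add_norm_sub _ _ _
  have t1 : ‖c.compAlongOrderedFinpartition f₁ p₁ - c.compAlongOrderedFinpartition f₂ p₁‖ ≤
      ε * R' ^ n := by
    rw [myCompSub]
    calc ‖c.compAlongOrderedFinpartition (f₁ - f₂) p₁‖ ≤ ‖f₁ - f₂‖ * ∏ i, ‖p₁ i‖ :=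
          myCompNorm _ _ _
      _ ≤ ε * R' ^ n := mul_le_mul hfd hprod (by positivity) hε
  have hB : ‖(c.compAlongOrderedFinpartitionL ℝ ℝ (ℝ × ℝ) ℝ) f₂‖ ≤ Mf := by
    apply ContinuousMultilinearMap.opNorm_le_bound hMf (fun p => ?_)
    exact (myCompNorm c f₂ p).trans (by gcongr)
  have t2 : ‖c.compAlongOrderedFinpartition f₂ p₁ - c.compAlongOrderedFinpartition f₂ p₂‖ ≤
      Mf * n * R' ^ n * δ := by
    have h := ((c.compAlongOrderedFinpartitionL ℝ ℝ (ℝ × ℝ) ℝ) f₂).norm_image_sub_le p₁ p₂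
    simp only [compAlongOrderedFinpartitionL_apply, Fintype.card_fin] at h
    apply h.trans
    have hmax : max ‖p₁‖ ‖p₂‖ ≤ R' := by
      apply max_le <;> rw [pi_norm_le_iff_of_nonneg hR0] <;> intro i
      exacts [h₁ i, h₂ i]
    have hd : ‖p₁ - p₂‖ ≤ δ := by
      rw [pi_norm_le_iff_of_nonneg hδ]; intro i; exact hpd i
    have hpow : max ‖p₁‖ ‖p₂‖ ^ (c.length - 1) ≤ R' ^ n := by
      refine le_trans (pow_le_pow_left₀ (le_max_of_le_left (norm_nonneg _)) hmax _) ?_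
      exact pow_le_pow_right₀ hR' (le_trans (Nat.sub_le _ _) hLn)
    apply mul_le_mul _ hd (norm_nonneg _) (by positivity)
    apply mul_le_mul _ hpow (by positivity) (by positivity)
    apply mul_le_mul hB (Nat.cast_le.2 hLn) (by positivity) hMf
  linarith



/-- **Lipschitz dependence of time-derivatives of `G(u, u̇)` on the jet of `u`.**
Let `k ≥ 1`, let `G : ℝ × ℝ → ℝ` be `C^k` with all (partial) derivatives of order at most `k`
bounded in norm by `M`, and let `R > 0`.  There is a constant `C > 0`, depending only on `k`,
`M`, `R`, such that for all `k`-times continuously differentiable `u`, `w` on an open interval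
`(a, b)` and `τ ∈ (a, b)` with `|u^{(r)}(τ)| ≤ R`, `|w^{(r)}(τ)| ≤ R` for `r = 0, …, k`,
`|(d/dt)^{k-1}[G(u, u̇)](τ) - (d/dt)^{k-1}[G(w, ẇ)](τ)| ≤ C max_{0 ≤ r ≤ k} |u^{(r)}(τ) - w^{(r)}(τ)|`. -/
theorem jet_lipschitz_time_derivative
    (k : ℕ) (hk : 1 ≤ k) (M R : ℝ) (hR : 0 < R) :
    ∃ C > 0,
      ∀ G : ℝ × ℝ → ℝ, ContDiff ℝ (k : ℕ∞) G →
        (∀ i ≤ k, ∀ p : ℝ × ℝ, ‖iteratedFDeriv ℝ i G p‖ ≤ M) →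
      ∀ a b : ℝ, ∀ u w : ℝ → ℝ,
        ContDiffOn ℝ (k : ℕ∞) u (Set.Ioo a b) →
        ContDiffOn ℝ (k : ℕ∞) w (Set.Ioo a b) →
      ∀ τ ∈ Set.Ioo a b,
        (∀ r ≤ k, |iteratedDeriv r u τ| ≤ R) →
        (∀ r ≤ k, |iteratedDeriv r w τ| ≤ R) →
        |iteratedDeriv (k - 1) (fun t => G (u t, deriv u t)) τ -
            iteratedDeriv (k - 1) (fun t => G (w t, deriv w t)) τ| ≤
          C * (Finset.range (k + 1)).sup' (by simp)
                (fun r => |iteratedDeriv r u τ - iteratedDeriv r w τ|) := by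
  classical
  set n := k - 1 with hn
  have hk1 : n + 1 = k := Nat.succ_pred_eq_of_pos hk
  set Q : ℝ := max R 1 with hQdef
  have hQ1 : (1:ℝ) ≤ Q := le_max_right _ _
  have hQ0 : (0:ℝ) ≤ Q := zero_le_one.trans hQ1
  set N : ℝ := (Fintype.card (OrderedFinpartition n) : ℝ) with hNdef
  have hN0 : 0 ≤ N := Nat.cast_nonneg _
  refine ⟨N * ((n + 1 : ℝ) * Q ^ n) * (max M 0 + 1) + 1, ?_, ?_⟩
  · have h1 : (0:ℝ) ≤ N * ((n + 1 : ℝ) * Q ^ n) * (max M 0 + 1) := by positivity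
    linarith
  intro G hG hM a b u w hu hw τ hτ hRu hRw
  have hM0 : 0 ≤ M := le_trans (norm_nonneg _) (hM 0 (Nat.zero_le _) (0, 0))
  set J : ℝ := (Finset.range (k + 1)).sup' (by simp)
      (fun r => |iteratedDeriv r u τ - iteratedDeriv r w τ|) with hJdef
  have hJle : ∀ r ≤ k, |iteratedDeriv r u τ - iteratedDeriv r w τ| ≤ J := by
    intro r hr
    exact Finset.le_sup' (fun r => |iteratedDeriv r u τ - iteratedDeriv r w τ|)
      (Finset.mem_range.2 (Nat.lt_succ_of_le hr))
  have hJ0 : 0 ≤ J := le_trans (abs_nonneg _) (hJle 0 (Nat.zero_le _))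
  have hso : IsOpen (Set.Ioo a b) := isOpen_Ioo
  have hsu : UniqueDiffOn ℝ (Set.Ioo a b) := hso.uniqueDiffOn
  -- the Faà di Bruno representation of the iterated derivative
  have main : ∀ (v : ℝ → ℝ), ContDiffOn ℝ (k : ℕ∞) v (Set.Ioo a b) →
      iteratedDeriv n (fun t => G (v t, deriv v t)) τ =
        ((ftaylorSeries ℝ G (v τ, deriv v τ)).taylorComp
          (fun m => (ftaylorSeriesWithin ℝ v (Set.Ioo a b) τ m).prod
            (ftaylorSeriesWithin ℝ (deriv v) (Set.Ioo a b) τ m)) n) (fun _ => 1) := by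
    intro v hv
    have hle : ((n : ℕ∞) : WithTop ℕ∞) + 1 ≤ ((k : ℕ∞) : WithTop ℕ∞) := by
      exact_mod_cast hk1.le
    have hle' : ((n : ℕ∞) : WithTop ℕ∞) ≤ ((k : ℕ∞) : WithTop ℕ∞) := by
      exact_mod_cast (Nat.sub_le k 1)
    have hvn : ContDiffOn ℝ (n : ℕ∞) v (Set.Ioo a b) := hv.of_le hle'
    have hv' : ContDiffOn ℝ (n : ℕ∞) (deriv v) (Set.Ioo a b) := hv.deriv_of_isOpen hso hle
    have Hv := (hvn.ftaylorSeriesWithin hsu).prodMk (hv'.ftaylorSeriesWithin hsu)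
    have HG : HasFTaylorSeriesUpToOn (n : ℕ∞) G (fun x => ftaylorSeries ℝ G x) univ :=
      hasFTaylorSeriesUpToOn_univ_iff.2 ((contDiff_iff_ftaylorSeries.1 hG).of_le hle')
    have Hcomp := HG.comp Hv (mapsTo_univ _ _)
    have key := Hcomp.eq_iteratedFDerivWithin_of_uniqueDiffOn
      (le_refl ((n : ℕ∞) : WithTop ℕ∞)) hsu hτ
    rw [iteratedDeriv_eq_iteratedFDeriv,
      ← iteratedFDerivWithin_of_isOpen (f := fun t => G (v t, deriv v t)) n hso hτ]
    exact congrFun (congrArg _ key.symm) _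
  -- norms of the jet coefficients
  have taylor_eq : ∀ (v : ℝ → ℝ) (j : ℕ),
      ftaylorSeriesWithin ℝ v (Set.Ioo a b) τ j = iteratedFDeriv ℝ j v τ :=
    fun v j => iteratedFDerivWithin_of_isOpen j hso hτ
  have djk : ∀ (v : ℝ → ℝ) (j : ℕ), iteratedDeriv j (deriv v) τ = iteratedDeriv (j + 1) v τ :=
    fun v j => (congrFun (iteratedDeriv_succ' (n := j) (f := v)) τ).symm
  have pnorm : ∀ (v : ℝ → ℝ), (∀ r ≤ k, |iteratedDeriv r v τ| ≤ R) → ∀ j ≤ n,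
      ‖(ftaylorSeriesWithin ℝ v (Set.Ioo a b) τ j).prod
        (ftaylorSeriesWithin ℝ (deriv v) (Set.Ioo a b) τ j)‖ ≤ Q := by
    intro v hv j hj
    rw [ContinuousMultilinearMap.opNorm_prod, taylor_eq, taylor_eq,
      norm_iteratedFDeriv_eq_norm_iteratedDeriv, norm_iteratedFDeriv_eq_norm_iteratedDeriv,
      Real.norm_eq_abs, Real.norm_eq_abs, djk]
    have h1 := hv j (le_trans hj (Nat.sub_le _ _))
    have h2 := hv (j + 1) (by omega)
    exact max_le (le_trans h1 (le_max_left _ _)) (le_trans h2 (le_max_left _ _))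
  have pdiff : ∀ j ≤ n,
      ‖(ftaylorSeriesWithin ℝ u (Set.Ioo a b) τ j).prod
          (ftaylorSeriesWithin ℝ (deriv u) (Set.Ioo a b) τ j) -
        (ftaylorSeriesWithin ℝ w (Set.Ioo a b) τ j).prod
          (ftaylorSeriesWithin ℝ (deriv w) (Set.Ioo a b) τ j)‖ ≤ J := by
    intro j hj
    rw [myProdSub, ContinuousMultilinearMap.opNorm_prod, taylor_eq, taylor_eq, taylor_eq,
      taylor_eq, myNormFDerivSub, myNormFDerivSub, djk, djk]
    exact max_le (hJle j (le_trans hj (Nat.sub_le _ _))) (hJle (j + 1) (by omega))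
  -- Lipschitz estimate for the derivatives of G
  have qdiff : ∀ j ≤ n, ∀ x y : ℝ × ℝ,
      ‖iteratedFDeriv ℝ j G x - iteratedFDeriv ℝ j G y‖ ≤ M * ‖x - y‖ := by
    intro j hj x y
    have hdiff : ∀ z ∈ (univ : Set (ℝ × ℝ)), DifferentiableAt ℝ (iteratedFDeriv ℝ j G) z := by
      intro z _
      exact (hG.differentiable_iteratedFDeriv (by exact_mod_cast (by omega : j < k))) z
    have hbound : ∀ z ∈ (univ : Set (ℝ × ℝ)), ‖fderiv ℝ (iteratedFDeriv ℝ j G) z‖ ≤ M := by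
      intro z _
      rw [norm_fderiv_iteratedFDeriv]
      exact hM (j + 1) (by omega) z
    exact Convex.norm_image_sub_le_of_norm_fderiv_le hdiff hbound convex_univ (mem_univ y) (mem_univ x)
  have hxy : ‖(u τ, deriv u τ) - (w τ, deriv w τ)‖ ≤ J := by
    rw [Prod.mk_sub_mk, Prod.norm_def]
    have h0 := hJle 0 (Nat.zero_le _)
    have h1 := hJle 1 hk
    rw [iteratedDeriv_zero, iteratedDeriv_zero] at h0
    rw [iteratedDeriv_one, iteratedDeriv_one] at h1
    exact max_le (by simpa using h0) (by simpa using h1)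
  -- put everything together
  rw [main u hu, main w hw]
  set pu : FormalMultilinearSeries ℝ ℝ (ℝ × ℝ) := fun m => (ftaylorSeriesWithin ℝ u (Set.Ioo a b) τ m).prod
      (ftaylorSeriesWithin ℝ (deriv u) (Set.Ioo a b) τ m) with hpu
  set pw : FormalMultilinearSeries ℝ ℝ (ℝ × ℝ) := fun m => (ftaylorSeriesWithin ℝ w (Set.Ioo a b) τ m).prod
      (ftaylorSeriesWithin ℝ (deriv w) (Set.Ioo a b) τ m) with hpw
  set qu := ftaylorSeries ℝ G (u τ, deriv u τ) with hqu
  set qw := ftaylorSeries ℝ G (w τ, deriv w τ) with hqw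
  have expand : ∀ (q : FormalMultilinearSeries ℝ (ℝ × ℝ) ℝ)
      (p : FormalMultilinearSeries ℝ ℝ (ℝ × ℝ)),
      (q.taylorComp p n) (fun _ => 1) =
        ∑ c : OrderedFinpartition n, (q.compAlongOrderedFinpartition p c) (fun _ => 1) := by
    intro q p
    rw [FormalMultilinearSeries.taylorComp, ContinuousMultilinearMap.sum_apply]
  rw [expand, expand, ← Finset.sum_sub_distrib]
  have percbound : ∀ c : OrderedFinpartition n,
      |(qu.compAlongOrderedFinpartition pu c) (fun _ => 1) -
        (qw.compAlongOrderedFinpartition pw c) (fun _ => 1)| ≤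
      (M * J) * Q ^ n + M * n * Q ^ n * J := by
    intro c
    have h1 : |(qu.compAlongOrderedFinpartition pu c) (fun _ => 1) -
        (qw.compAlongOrderedFinpartition pw c) (fun _ => 1)| ≤
        ‖qu.compAlongOrderedFinpartition pu c - qw.compAlongOrderedFinpartition pw c‖ := by
      rw [← Real.norm_eq_abs, ← ContinuousMultilinearMap.sub_apply]
      refine le_trans (ContinuousMultilinearMap.le_opNorm _ _) ?_
      simp
    refine h1.trans ?_
    refine myCompDiff c M Q (M * J) J hM0 hQ1 (by positivity) hJ0 _ _ _ _
      (hM c.length (le_trans c.length_le (by omega)) _) ?_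
      (fun i => pnorm u hRu (c.partSize i) (c.partSize_le i))
      (fun i => pnorm w hRw (c.partSize i) (c.partSize_le i))
      (fun i => pdiff (c.partSize i) (c.partSize_le i))
    calc ‖qu c.length - qw c.length‖ ≤ M * ‖(u τ, deriv u τ) - (w τ, deriv w τ)‖ :=
          qdiff c.length c.length_le _ _
      _ ≤ M * J := mul_le_mul_of_nonneg_left hxy hM0
  calc |∑ c : OrderedFinpartition n,
        ((qu.compAlongOrderedFinpartition pu c) (fun _ => 1) -
          (qw.compAlongOrderedFinpartition pw c) (fun _ => 1))|
      ≤ ∑ c : OrderedFinpartition n,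
        |(qu.compAlongOrderedFinpartition pu c) (fun _ => 1) -
          (qw.compAlongOrderedFinpartition pw c) (fun _ => 1)| :=
        Finset.abs_sum_le_sum_abs _ _
    _ ≤ ∑ _c : OrderedFinpartition n, ((M * J) * Q ^ n + M * n * Q ^ n * J) :=
        Finset.sum_le_sum (fun c _ => percbound c)
    _ = N * ((M * J) * Q ^ n + M * n * Q ^ n * J) := by
        rw [Finset.sum_const, Finset.card_univ, nsmul_eq_mul, hNdef]
    _ ≤ (N * ((n + 1 : ℝ) * Q ^ n) * (max M 0 + 1) + 1) * J := by
        have hMle : M ≤ max M 0 + 1 := by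
          have := le_max_left M 0; linarith
        have hQn : (0:ℝ) ≤ Q ^ n := by positivity
        nlinarith [mul_nonneg hN0 hQn, mul_nonneg (mul_nonneg hN0 hQn) hJ0,
          mul_nonneg (mul_nonneg (mul_nonneg hN0 hQn) hJ0) (Nat.cast_nonneg (α := ℝ) n)]
end
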